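/- arXiv:2504.11865 — 8 statements merged into one kernel-verified Lean document; each statement's English description precedes it below -/
import Mathlib

section
/- The Apéry numbers f_n = Σ_{k=0}^n C(n,k)^2 C(n+k,k) satisfy the recurrence (n+2)^2 f_{n+2} = (11n^2+33n+25) f_{n+1} + (n+1)^2 f_n for all n ≥ 0. -/
/-- Apéry numbers -/
def apery (n : ℕ) : ℕ := ∑ k ∈ Finset.range (n + 1), (n.choose k) ^ 2 * ((n + k).choose k)

def Fq (n k : ℕ) : ℚ := ((n.choose k : ℚ)) ^ 2 * (((n + k).choose k : ℚ))

def Pq (x y : ℚ) : ℚ :=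
  -(11*x^4) - 48*x^3 - 5*x^3*y - 67*x^2 - 35*x^2*y + 7*x^2*y^2 - 30*x - 60*x*y
    + 14*x*y^2 + x*y^3 - 30*y + 7*y^2 + y^3

def Gq (n k : ℕ) : ℚ :=
  match k with
  | 0 => 0
  | (j+1) => Pq n (j+1) * (((n+1).choose j : ℚ))^2 * (((n+j).choose j : ℚ))

lemma cast_cms (m r : ℕ) :
    (m.choose r : ℚ) * (m+1) = ((m+1).choose r : ℚ) * ((m:ℚ) + 1 - r) := by
  rcases le_or_gt r (m+1) with h | h
  · have hh := Nat.choose_mul_succ_eq m r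
    have := congrArg (fun x : ℕ => (x : ℚ)) hh
    push_cast [Nat.cast_sub h] at this
    linarith [this]
  · rw [Nat.choose_eq_zero_of_lt (by omega), Nat.choose_eq_zero_of_lt (by omega)]
    ring

lemma key (n k : ℕ) :
    ((n:ℚ)+1)^2 * ((n+2)^2 * Fq (n+2) k - (11*n^2+33*n+25) * Fq (n+1) k
      - (n+1)^2 * Fq n k) = Gq n (k+1) - Gq n k := by
  match k with
  | 0 =>
      simp [Fq, Gq, Pq]
      ring
  | (j+1) =>
    rcases lt_or_ge j n with hj | hge
    · -- main case: k = j+1 ≤ n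
      have hjq : (j:ℚ) < n := by exact_mod_cast hj
      have d1 : ((n:ℚ) - j) ≠ 0 := by intro h; linarith [h]
      have d2 : ((n:ℚ) + 1 - j) ≠ 0 := by intro h; linarith [h]
      have d3 : ((n:ℚ) + 1) ≠ 0 := by positivity
      have d4 : ((n:ℚ) + 2) ≠ 0 := by positivity
      have d5 : ((n:ℚ) + j + 1) ≠ 0 := by positivity
      -- c1 : A*(n+1) = A1*(n-j)
      have c1 := cast_cms n (j+1)
      have c2 := cast_cms (n+1) (j+1)
      have c3 := cast_cms (n+j+1) (j+1)
      have c4 := cast_cms (n+j+2) (j+1)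
      push_cast at c1 c2 c3 c4
      have c5 : ((n+1).choose (j+1) : ℚ) * ((j:ℚ)+1)
          = ((n+1).choose j : ℚ) * ((n:ℚ) + 1 - j) := by
        have hh := Nat.choose_succ_right_eq (n+1) j
        have := congrArg (fun x : ℕ => (x : ℚ)) hh
        push_cast [Nat.cast_sub (by omega : j ≤ n + 1)] at this
        linarith [this]
      have c6 : ((n:ℚ)+j+1) * ((n+j).choose j : ℚ)
          = ((n+j+1).choose (j+1) : ℚ) * ((j:ℚ)+1) := by
        have hh := Nat.add_one_mul_choose_eq (n+j) j
        have := congrArg (fun x : ℕ => (x : ℚ)) hh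
        push_cast at this
        linarith [this]
      have eA1 : ((n+1).choose (j+1) : ℚ)
          = (n.choose (j+1) : ℚ) * ((n:ℚ)+1) / ((n:ℚ) - j) := by
        rw [eq_div_iff d1]; linear_combination -c1
      have eA2 : ((n+2).choose (j+1) : ℚ)
          = ((n+1).choose (j+1) : ℚ) * ((n:ℚ)+2) / ((n:ℚ) + 1 - j) := by
        rw [eq_div_iff d2]; linear_combination -c2
      have eB1 : ((n+j+2).choose (j+1) : ℚ)
          = ((n+j+1).choose (j+1) : ℚ) * ((n:ℚ)+j+2) / ((n:ℚ)+1) := by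
        rw [eq_div_iff d3]; linear_combination -c3
      have eB2 : ((n+j+3).choose (j+1) : ℚ)
          = ((n+j+2).choose (j+1) : ℚ) * ((n:ℚ)+j+3) / ((n:ℚ)+2) := by
        rw [eq_div_iff d4]; linear_combination -c4
      have eAm : ((n+1).choose j : ℚ)
          = ((n+1).choose (j+1) : ℚ) * ((j:ℚ)+1) / ((n:ℚ) + 1 - j) := by
        rw [eq_div_iff d2]; linear_combination -c5
      have eBm : ((n+j).choose j : ℚ)
          = ((n+j+1).choose (j+1) : ℚ) * ((j:ℚ)+1) / ((n:ℚ)+j+1) := by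
        rw [eq_div_iff d5]; linear_combination c6
      simp only [Fq, Gq, Pq, show n+2+(j+1) = n+j+3 from by ring,
        show n+1+(j+1) = n+j+2 from by ring, show n+(j+1) = n+j+1 from by ring]
      rw [eA2, eB2, eAm, eBm, eB1, eA1]
      push_cast
      field_simp
      ring
    · rcases Nat.lt_or_ge j (n+2) with h2 | h2
      · have hcase : j = n ∨ j = n+1 := by omega
        rcases hcase with rfl | rfl
        · -- k = j+1
          have d3 : ((j:ℚ) + 1) ≠ 0 := by positivity
          have d4 : ((j:ℚ) + 2) ≠ 0 := by positivity
          have r1 := cast_cms (j+j+1) (j+1)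
          have r2 := cast_cms (j+j+2) (j+1)
          have r3 : ((j:ℚ)+j+1) * ((j+j).choose j : ℚ)
              = ((j+j+1).choose (j+1) : ℚ) * ((j:ℚ)+1) := by
            have hh := Nat.add_one_mul_choose_eq (j+j) j
            have := congrArg (fun x : ℕ => (x : ℚ)) hh
            push_cast at this
            linarith [this]
          push_cast at r1 r2
          have eB2 : ((j+j+3).choose (j+1) : ℚ)
              = ((j+j+2).choose (j+1) : ℚ) * ((j:ℚ)+j+3) / ((j:ℚ)+2) := by
            rw [eq_div_iff d4]
            linear_combination -r2
          have eB1 : ((j+j+2).choose (j+1) : ℚ)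
              = ((j+j+1).choose (j+1) : ℚ) * ((j:ℚ)+j+2) / ((j:ℚ)+1) := by
            rw [eq_div_iff d3]
            linear_combination -r1
          have eB : ((j+j+1).choose (j+1) : ℚ)
              = ((j+j).choose j : ℚ) * ((j:ℚ)+j+1) / ((j:ℚ)+1) := by
            rw [eq_div_iff d3]
            linear_combination -r3
          simp only [Fq, Gq, Pq, show j+2+(j+1) = j+j+3 from by ring,
            show j+1+(j+1) = j+j+2 from by ring, show j+(j+1) = j+j+1 from by ring,
            Nat.choose_self, Nat.choose_succ_self, Nat.choose_succ_self_right,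
            show (j+2).choose (j+1) = j+2 from Nat.choose_succ_self_right (j+1)]
          rw [eB2, eB1, eB]
          push_cast
          field_simp
          ring
        · -- k = n+2
          have d3 : ((n:ℚ) + 1) ≠ 0 := by positivity
          have d4 : ((n:ℚ) + 2) ≠ 0 := by positivity
          have s2 := cast_cms (n+n+2) (n+2)
          have s3 := cast_cms (n+n+3) (n+2)
          have s1 : ((n:ℚ)+n+2) * ((n+n+1).choose (n+1) : ℚ)
              = ((n+n+2).choose (n+2) : ℚ) * ((n:ℚ)+2) := by
            have hh := Nat.add_one_mul_choose_eq (n+n+1) (n+1)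
            have := congrArg (fun x : ℕ => (x : ℚ)) hh
            push_cast at this
            linarith [this]
          push_cast at s2 s3
          have eC2 : ((n+n+4).choose (n+2) : ℚ)
              = ((n+n+3).choose (n+2) : ℚ) * ((n:ℚ)+n+4) / ((n:ℚ)+2) := by
            rw [eq_div_iff d4]
            linear_combination -s3
          have eC1 : ((n+n+3).choose (n+2) : ℚ)
              = ((n+n+2).choose (n+2) : ℚ) * ((n:ℚ)+n+3) / ((n:ℚ)+1) := by
            rw [eq_div_iff d3]
            linear_combination -s2
          have eC : ((n+n+2).choose (n+2) : ℚ)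
              = ((n+n+1).choose (n+1) : ℚ) * ((n:ℚ)+n+2) / ((n:ℚ)+2) := by
            rw [eq_div_iff d4]
            linear_combination -s1
          simp only [Fq, Gq, Pq, show n+2+(n+2) = n+n+4 from by ring,
            show n+1+(n+2) = n+n+3 from by ring, show n+(n+2) = n+n+2 from by ring,
            show n+(n+1) = n+n+1 from by ring,
            Nat.choose_self, Nat.choose_succ_self,
            show (n+1).choose (n+2) = 0 from Nat.choose_eq_zero_of_lt (by omega),
            show n.choose (n+2) = 0 from Nat.choose_eq_zero_of_lt (by omega)]
          rw [eC2, eC1, eC]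
          push_cast
          field_simp
          ring
      · -- k = j+1 ≥ n+3 : everything vanishes
        simp only [Fq, Gq, Pq,
          show (n+2).choose (j+1) = 0 from Nat.choose_eq_zero_of_lt (by omega),
          show (n+1).choose (j+1) = 0 from Nat.choose_eq_zero_of_lt (by omega),
          show n.choose (j+1) = 0 from Nat.choose_eq_zero_of_lt (by omega),
          show (n+1).choose j = 0 from Nat.choose_eq_zero_of_lt (by omega)]
        push_cast
        ring

lemma Gq_zero (n : ℕ) : Gq n 0 = 0 := rfl

lemma Gq_top (n : ℕ) : Gq n (n+3) = 0 := by
  rw [show n+3 = n+2+1 from rfl]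
  simp [Gq, Nat.choose_eq_zero_of_lt (show n+1 < n+2 by omega)]

lemma sum_key (n : ℕ) :
    ((n:ℚ)+1)^2 * ((n+2)^2 * ∑ k ∈ Finset.range (n+3), Fq (n+2) k
      - (11*n^2+33*n+25) * ∑ k ∈ Finset.range (n+3), Fq (n+1) k
      - (n+1)^2 * ∑ k ∈ Finset.range (n+3), Fq n k) = 0 := by
  have h2 : ∑ k ∈ Finset.range (n+3),
      (((n:ℚ)+1)^2 * ((n+2)^2 * Fq (n+2) k - (11*n^2+33*n+25) * Fq (n+1) k
        - (n+1)^2 * Fq n k)) = 0 := by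
    simp_rw [key]
    rw [Finset.sum_range_sub (fun k => Gq n k), Gq_top, Gq_zero]
    ring
  rw [← h2]
  rw [Finset.mul_sum, Finset.mul_sum, Finset.mul_sum, ← Finset.sum_sub_distrib,
    ← Finset.sum_sub_distrib]
  rw [Finset.mul_sum]

lemma apery_cast (m r : ℕ) (h : m + 1 ≤ r) :
    (apery m : ℚ) = ∑ k ∈ Finset.range r, Fq m k := by
  rw [apery]
  rw [← Finset.sum_range_add_sum_Ico (fun k => Fq m k) h]
  have hz : ∑ k ∈ Finset.Ico (m+1) r, Fq m k = 0 := by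
    apply Finset.sum_eq_zero
    intro k hk
    have : m < k := (Finset.mem_Ico.mp hk).1
    simp [Fq, Nat.choose_eq_zero_of_lt this]
  rw [hz, add_zero]
  push_cast [Fq]
  rfl

theorem apery_recurrence (n : ℕ) :
    (n + 2) ^ 2 * apery (n + 2) =
      (11 * n ^ 2 + 33 * n + 25) * apery (n + 1) + (n + 1) ^ 2 * apery n := by
  have hq := sum_key n
  have hne : ((n:ℚ)+1)^2 ≠ 0 := by positivity
  have hmain : ((n:ℚ)+2)^2 * (∑ k ∈ Finset.range (n+3), Fq (n+2) k)
      - (11*(n:ℚ)^2+33*(n:ℚ)+25) * (∑ k ∈ Finset.range (n+3), Fq (n+1) k)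
      - ((n:ℚ)+1)^2 * (∑ k ∈ Finset.range (n+3), Fq n k) = 0 := by
    rcases mul_eq_zero.mp hq with h | h
    · exact absurd h hne
    · exact h
  have e2 := apery_cast (n+2) (n+3) (by omega)
  have e1 := apery_cast (n+1) (n+3) (by omega)
  have e0 := apery_cast n (n+3) (by omega)
  have final : (((n+2)^2 * apery (n+2) : ℕ) : ℚ)
      = (((11*n^2+33*n+25) * apery (n+1) + (n+1)^2 * apery n : ℕ) : ℚ) := by
    push_cast
    rw [e2, e1, e0]
    linear_combination hmain
  exact_mod_cast final
end

section
/- The Franel numbers g_n = Σ_{k=0}^n C(n,k)^3 satisfy the recurrence (n+2)^2 g_{n+2} = (7n^2+21n+16) g_{n+1} + 8(n+1)^2 g_n for all n ≥ 0. -/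
/-- Franel numbers -/
def franel (n : ℕ) : ℕ := ∑ k ∈ Finset.range (n + 1), (n.choose k) ^ 3

/-- Zeilberger certificate numerator for the Franel recurrence. -/
def Npol (n k : ℚ) : ℚ :=
  k ^ 3 * ((-72 + 78 * k - 30 * k ^ 2 + 4 * k ^ 3)
    + n * (-272 + 249 * k - 78 * k ^ 2 + 8 * k ^ 3)
    + n ^ 2 * (-402 + 291 * k - 66 * k ^ 2 + 4 * k ^ 3)
    + n ^ 3 * (-290 + 147 * k - 18 * k ^ 2)
    + n ^ 4 * (-102 + 27 * k)
    - 14 * n ^ 5)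

/-- The telescoping certificate function. -/
def Scert (n k : ℕ) : ℚ := Npol n k * ((n + 2).choose k : ℚ) ^ 3

lemma rel_n (m k : ℕ) :
    ((m : ℚ) + 1) * (m.choose k : ℚ) = ((m : ℚ) + 1 - (k : ℚ)) * ((m + 1).choose k : ℚ) := by
  by_cases h : k ≤ m + 1
  · have h1 := Nat.choose_mul_succ_eq m k
    have h2 : ((m.choose k * (m + 1) : ℕ) : ℚ) = (((m + 1).choose k * (m + 1 - k) : ℕ) : ℚ) := by
      exact_mod_cast congrArg (Nat.cast (R := ℚ)) h1
    push_cast [Nat.cast_sub h] at h2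
    linarith
  · push_neg at h
    rw [Nat.choose_eq_zero_of_lt (by omega), Nat.choose_eq_zero_of_lt (by omega)]
    simp

lemma rel_k (m k : ℕ) :
    ((k : ℚ) + 1) * (m.choose (k + 1) : ℚ) = ((m : ℚ) - (k : ℚ)) * (m.choose k : ℚ) := by
  by_cases h : k ≤ m
  · have h1 := Nat.choose_succ_right_eq m k
    have h2 : ((m.choose (k + 1) * (k + 1) : ℕ) : ℚ) = ((m.choose k * (m - k) : ℕ) : ℚ) := by
      exact_mod_cast congrArg (Nat.cast (R := ℚ)) h1
    push_cast [Nat.cast_sub h] at h2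
    linarith
  · push_neg at h
    rw [Nat.choose_eq_zero_of_lt (by omega), Nat.choose_eq_zero_of_lt (by omega)]
    simp

lemma termwise (n k : ℕ) :
    ((n : ℚ) + 1) ^ 3 * ((n : ℚ) + 2) ^ 3 *
      (((n : ℚ) + 2) ^ 2 * ((n + 2).choose k : ℚ) ^ 3
        - (7 * (n : ℚ) ^ 2 + 21 * (n : ℚ) + 16) * ((n + 1).choose k : ℚ) ^ 3
        - 8 * ((n : ℚ) + 1) ^ 2 * (n.choose k : ℚ) ^ 3)
    = Scert n (k + 1) - Scert n k := by
  have hA := rel_n n k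
  have hB := rel_n (n + 1) k
  rw [show n + 1 + 1 = n + 2 from rfl] at hB
  have hK := rel_k (n + 2) k
  have hn1 : ((n : ℚ) + 1) ≠ 0 := by positivity
  have hn2 : ((n : ℚ) + 2) ≠ 0 := by positivity
  have hk1 : ((k : ℚ) + 1) ≠ 0 := by positivity
  push_cast at hA hB hK
  have ea : (n.choose k : ℚ) = ((n : ℚ) + 1 - k) * ((n + 1).choose k : ℚ) / ((n : ℚ) + 1) := by
    field_simp
    linarith
  have eb : ((n + 1).choose k : ℚ) = ((n : ℚ) + 2 - k) * ((n + 2).choose k : ℚ) / ((n : ℚ) + 2) := by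
    field_simp
    linarith
  have ec : ((n + 2).choose (k + 1) : ℚ) = ((n : ℚ) + 2 - k) * ((n + 2).choose k : ℚ) / ((k : ℚ) + 1) := by
    field_simp
    linarith
  simp only [Scert, Npol]
  rw [ea, eb, ec]
  push_cast
  field_simp
  ring

theorem franel_recurrence (n : ℕ) :
    (n + 2) ^ 2 * franel (n + 2) =
      (7 * n ^ 2 + 21 * n + 16) * franel (n + 1) + 8 * (n + 1) ^ 2 * franel n := by
  have key : ∀ m : ℕ, (franel m : ℚ) = ∑ k ∈ Finset.range (m + 1), ((m.choose k : ℚ)) ^ 3 := by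
    intro m
    unfold franel
    push_cast
    rfl
  have e2 : (franel (n + 2) : ℚ) = ∑ k ∈ Finset.range (n + 3), ((n + 2).choose k : ℚ) ^ 3 := key (n + 2)
  have e1 : (franel (n + 1) : ℚ) = ∑ k ∈ Finset.range (n + 3), ((n + 1).choose k : ℚ) ^ 3 := by
    have h := Finset.sum_range_succ (fun k => ((n + 1).choose k : ℚ) ^ 3) (n + 2)
    rw [key (n + 1), show n + 3 = n + 2 + 1 from rfl, h,
      Nat.choose_eq_zero_of_lt (show n + 1 < n + 2 by omega)]
    simp [show n + 1 + 1 = n + 2 from rfl]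
  have e0 : (franel n : ℚ) = ∑ k ∈ Finset.range (n + 3), (n.choose k : ℚ) ^ 3 := by
    have h2 := Finset.sum_range_succ (fun k => ((n).choose k : ℚ) ^ 3) (n + 2)
    have h1 := Finset.sum_range_succ (fun k => ((n).choose k : ℚ) ^ 3) (n + 1)
    rw [key n, show n + 3 = n + 2 + 1 from rfl, h2, show n + 2 = n + 1 + 1 from rfl, h1,
      Nat.choose_eq_zero_of_lt (show n < n + 1 by omega),
      Nat.choose_eq_zero_of_lt (show n < n + 1 + 1 by omega)]
    simp
  have hS0 : Scert n 0 = 0 := by simp [Scert, Npol]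
  have hSn : Scert n (n + 3) = 0 := by
    simp [Scert, Nat.choose_eq_zero_of_lt (by omega : n + 2 < n + 3)]
  have h0 : ((n : ℚ) + 1) ^ 3 * ((n : ℚ) + 2) ^ 3 *
      (((n : ℚ) + 2) ^ 2 * (∑ k ∈ Finset.range (n + 3), ((n + 2).choose k : ℚ) ^ 3)
        - (7 * (n : ℚ) ^ 2 + 21 * (n : ℚ) + 16) * (∑ k ∈ Finset.range (n + 3), ((n + 1).choose k : ℚ) ^ 3)
        - 8 * ((n : ℚ) + 1) ^ 2 * (∑ k ∈ Finset.range (n + 3), (n.choose k : ℚ) ^ 3)) = 0 := by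
    calc ((n : ℚ) + 1) ^ 3 * ((n : ℚ) + 2) ^ 3 *
      (((n : ℚ) + 2) ^ 2 * (∑ k ∈ Finset.range (n + 3), ((n + 2).choose k : ℚ) ^ 3)
        - (7 * (n : ℚ) ^ 2 + 21 * (n : ℚ) + 16) * (∑ k ∈ Finset.range (n + 3), ((n + 1).choose k : ℚ) ^ 3)
        - 8 * ((n : ℚ) + 1) ^ 2 * (∑ k ∈ Finset.range (n + 3), (n.choose k : ℚ) ^ 3))
        = ∑ k ∈ Finset.range (n + 3), ((n : ℚ) + 1) ^ 3 * ((n : ℚ) + 2) ^ 3 *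
            (((n : ℚ) + 2) ^ 2 * ((n + 2).choose k : ℚ) ^ 3
              - (7 * (n : ℚ) ^ 2 + 21 * (n : ℚ) + 16) * ((n + 1).choose k : ℚ) ^ 3
              - 8 * ((n : ℚ) + 1) ^ 2 * (n.choose k : ℚ) ^ 3) := by
          simp only [Finset.mul_sum, Finset.sum_sub_distrib, mul_sub]
      _ = ∑ k ∈ Finset.range (n + 3), (Scert n (k + 1) - Scert n k) :=
          Finset.sum_congr rfl fun k _ => termwise n k
      _ = Scert n (n + 3) - Scert n 0 := Finset.sum_range_sub (Scert n) (n + 3)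
      _ = 0 := by rw [hS0, hSn]; ring
  have hbig : ((n : ℚ) + 1) ^ 3 * ((n : ℚ) + 2) ^ 3 ≠ 0 := by positivity
  have h1 := (mul_eq_zero.mp h0).resolve_left hbig
  rw [← e2, ← e1, ← e0] at h1
  have goalQ : ((n : ℚ) + 2) ^ 2 * (franel (n + 2) : ℚ)
      = (7 * (n : ℚ) ^ 2 + 21 * (n : ℚ) + 16) * (franel (n + 1) : ℚ)
        + 8 * ((n : ℚ) + 1) ^ 2 * (franel n : ℚ) := by linarith
  exact_mod_cast goalQ
end

section
/- For the Apéry polynomial f_n(x) = Σ_{k=0}^n C(n,k)^2 C(n+k,k) x^k, the second derivative at 1 satisfies 5n(n−1) f_n''(1) = −(n^2+3n−1)(n+1)^2 f_{n+1}(1) + (n+1)(13n^3+27n^2+n−3) f_n(1) for all n ≥ 2. -/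
open Polynomial

/-- The Apéry polynomial. -/
noncomputable def aperyPoly (n : ℕ) : Polynomial ℝ :=
  ∑ k ∈ Finset.range (n + 1),
    C (((n.choose k) ^ 2 * ((n + k).choose k) : ℕ) : ℝ) * X ^ k

/-- Zeilberger-style certificate polynomial. -/
noncomputable def aperyP (n k : ℕ) : ℝ :=
  (7 - 19 * (n:ℝ) - 38 * (n:ℝ)^2 - 12 * (n:ℝ)^3)
    + (15 * (n:ℝ)^2 + 25 * (n:ℝ) - 5) * (k:ℝ) - 5 * (n:ℝ) * (k:ℝ)^2

/-- Telescoping certificate. -/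
noncomputable def aperyG (n k : ℕ) : ℝ :=
  aperyP n k * (k:ℝ) * ((n.choose (k-1)) : ℝ)^2 * (((n+k).choose k) : ℝ)

lemma apery_term (n k : ℕ) (hn : 1 ≤ n) (hk : k ≤ n+1) :
    5*(n:ℝ)*((n:ℝ)-1)*((k:ℝ)*((k:ℝ)-1))*((n.choose k:ℝ)^2*((n+k).choose k:ℝ))
    + ((n:ℝ)^2+3*(n:ℝ)-1)*((n:ℝ)+1)^2*(((n+1).choose k:ℝ)^2*(((n+1)+k).choose k:ℝ))
    - ((n:ℝ)+1)*(13*(n:ℝ)^3+27*(n:ℝ)^2+(n:ℝ)-3)*((n.choose k:ℝ)^2*((n+k).choose k:ℝ))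
    = aperyG n (k+1) - aperyG n k := by
  rcases Nat.eq_zero_or_pos k with rfl | hk1
  · simp [aperyG, aperyP, Nat.choose_one_right]
    ring
  rcases eq_or_lt_of_le hk with rfl | hkn
  · -- k = n + 1
    have s2 : (2*n+1).choose (n+1) = (2*n+1).choose n := by
      rw [← Nat.choose_symm (by omega : n ≤ 2*n+1)]; congr 1; omega
    have h5n : (2*n+2) * ((2*n+1).choose (n+1)) = ((2*n+2).choose (n+1)) * (n+1) := by
      have h := Nat.add_one_mul_choose_eq (2*n+1) n
      have e : 2*n+1+1 = 2*n+2 := by omega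
      rw [e] at h
      rw [s2]; exact h
    have h5 : (2*(n:ℝ)+2) * ((2*n+1).choose (n+1):ℝ)
        = ((2*n+2).choose (n+1):ℝ) * ((n:ℝ)+1) := by exact_mod_cast h5n
    simp only [aperyG, aperyP, Nat.add_sub_cancel, Nat.succ_sub_one,
      show n+(n+1+1) = 2*n+2 from by omega, show n+(n+1) = 2*n+1 from by omega,
      show (n+1)+(n+1) = 2*n+2 from by omega,
      Nat.choose_succ_self, Nat.choose_self]
    push_cast
    linear_combination (-((n:ℝ)^2+3*(n:ℝ)-1)*((n:ℝ)+1)) * h5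
  · -- 1 ≤ k ≤ n
    have hkn' : k ≤ n := by omega
    obtain ⟨j, rfl⟩ : ∃ j, k = j + 1 := ⟨k - 1, by omega⟩
    have hjn : j < n := by omega
    have hNJ : (n:ℝ) - (j:ℝ) ≠ 0 := by
      have : (j:ℝ) < (n:ℝ) := by exact_mod_cast hjn
      intro h; linarith
    have hN1 : ((n:ℝ) + 1) ≠ 0 := by positivity
    have hJ2 : ((j:ℝ) + 2) ≠ 0 := by positivity
    have r1 : (n.choose (j+1) : ℝ) * ((j:ℝ) + 1) = (n.choose j : ℝ) * ((n:ℝ) - (j:ℝ)) := by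
      have h := Nat.choose_succ_right_eq n j
      have hc : ((n - j : ℕ) : ℝ) = (n:ℝ) - (j:ℝ) := by
        rw [Nat.cast_sub (by omega : j ≤ n)]
      rw [← hc]; exact_mod_cast h
    have r2 : ((n+1).choose (j+1) : ℝ) = (n.choose j : ℝ) + (n.choose (j+1) : ℝ) := by
      exact_mod_cast congrArg (Nat.cast (R := ℝ)) (Nat.choose_succ_succ n j)
    have s1 := Nat.add_one_mul_choose_eq (n+j+1) n
    have s2 : (n+j+1).choose n = (n+j+1).choose (j+1) := by
      rw [← Nat.choose_symm (by omega : j+1 ≤ n+j+1)]; congr 1; omega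
    have s3 : (n+j+1+1).choose (n+1) = (n+j+1+1).choose (j+1) := by
      rw [← Nat.choose_symm (by omega : j+1 ≤ n+j+1+1)]; congr 1; omega
    simp only [Nat.succ_eq_add_one, s2, s3] at s1
    have r3 : ((n:ℝ)+1) * (((n+1)+(j+1)).choose (j+1) : ℝ)
        = ((n:ℝ) + (j:ℝ) + 2) * ((n+(j+1)).choose (j+1) : ℝ) := by
      have e : (n+1)+(j+1) = n+j+1+1 := by omega
      have e' : n+(j+1) = n+j+1 := by omega
      rw [e, e']
      have h := congrArg (Nat.cast (R := ℝ)) s1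
      push_cast at h ⊢
      linarith [h]
    have s4 := Nat.add_one_mul_choose_eq (n+j+1) (j+1)
    have r4 : ((n:ℝ) + (j:ℝ) + 2) * ((n+(j+1)).choose (j+1) : ℝ)
        = ((n+(j+1+1)).choose (j+1+1) : ℝ) * ((j:ℝ) + 2) := by
      have e' : n+(j+1) = n+j+1 := by omega
      have e'' : n+(j+1+1) = n+j+1+1 := by omega
      rw [e', e'']
      have h := congrArg (Nat.cast (R := ℝ)) s4
      push_cast at h ⊢
      linarith [h]
    simp only [aperyG, aperyP, Nat.add_sub_cancel, Nat.succ_sub_one]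
    rw [r2]
    have hB : (n.choose j : ℝ) = (n.choose (j+1) : ℝ) * ((j:ℝ)+1) / ((n:ℝ) - (j:ℝ)) := by
      rw [eq_div_iff hNJ]; linear_combination -r1
    have hH : (((n+1)+(j+1)).choose (j+1) : ℝ)
        = ((n:ℝ) + (j:ℝ) + 2) * ((n+(j+1)).choose (j+1) : ℝ) / ((n:ℝ)+1) := by
      rw [eq_div_iff hN1]; linear_combination r3
    have hF : ((n+(j+1+1)).choose (j+1+1) : ℝ)
        = ((n:ℝ) + (j:ℝ) + 2) * ((n+(j+1)).choose (j+1) : ℝ) / ((j:ℝ)+2) := by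
      rw [eq_div_iff hJ2]; linear_combination -r4
    rw [hH, hF, hB]
    push_cast
    field_simp
    ring

lemma apery_eval (n : ℕ) :
    (aperyPoly n).eval 1
      = ∑ k ∈ Finset.range (n+1), ((n.choose k:ℝ)^2*((n+k).choose k:ℝ)) := by
  simp [aperyPoly, eval_finset_sum]

lemma d2_term (c : ℝ) (k : ℕ) :
    (derivative (derivative (C c * X^k))).eval 1 = (k:ℝ)*((k:ℝ)-1)*c := by
  match k with
  | 0 => simp
  | 1 => simp
  | (m+2) =>
    simp [derivative_C_mul, derivative_X_pow]
    push_cast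
    ring

lemma apery_deriv2 (n : ℕ) :
    (derivative (derivative (aperyPoly n))).eval 1
      = ∑ k ∈ Finset.range (n+1),
          (k:ℝ)*((k:ℝ)-1)*((n.choose k:ℝ)^2*((n+k).choose k:ℝ)) := by
  rw [aperyPoly, derivative_sum]
  rw [derivative_sum]
  rw [eval_finset_sum]
  refine Finset.sum_congr rfl fun k _ => ?_
  rw [d2_term]
  push_cast
  ring

theorem apery_second_deriv_recurrence (n : ℕ) (hn : 2 ≤ n) :
    5 * (n : ℝ) * ((n : ℝ) - 1) * (derivative (derivative (aperyPoly n))).eval 1 =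
      -(((n : ℝ) ^ 2 + 3 * n - 1) * ((n : ℝ) + 1) ^ 2) * (aperyPoly (n + 1)).eval 1
        + ((n : ℝ) + 1) * (13 * (n : ℝ) ^ 3 + 27 * n ^ 2 + n - 3) * (aperyPoly n).eval 1 := by
  have g0 : aperyG n 0 = 0 := by simp [aperyG]
  have gend : aperyG n (n+2) = 0 := by
    simp [aperyG, Nat.add_sub_cancel, Nat.choose_succ_self]
  have key : 5*(n:ℝ)*((n:ℝ)-1) *
        (∑ k ∈ Finset.range (n+2), (k:ℝ)*((k:ℝ)-1)*((n.choose k:ℝ)^2*((n+k).choose k:ℝ)))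
      + ((n:ℝ)^2+3*(n:ℝ)-1)*((n:ℝ)+1)^2 *
        (∑ k ∈ Finset.range (n+2), (((n+1).choose k:ℝ)^2*(((n+1)+k).choose k:ℝ)))
      - ((n:ℝ)+1)*(13*(n:ℝ)^3+27*(n:ℝ)^2+(n:ℝ)-3) *
        (∑ k ∈ Finset.range (n+2), ((n.choose k:ℝ)^2*((n+k).choose k:ℝ))) = 0 := by
    rw [Finset.mul_sum, Finset.mul_sum, Finset.mul_sum, ← Finset.sum_add_distrib,
      ← Finset.sum_sub_distrib]
    have h : ∀ k ∈ Finset.range (n+2),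
        (5*(n:ℝ)*((n:ℝ)-1) * ((k:ℝ)*((k:ℝ)-1)*((n.choose k:ℝ)^2*((n+k).choose k:ℝ)))
          + ((n:ℝ)^2+3*(n:ℝ)-1)*((n:ℝ)+1)^2 * (((n+1).choose k:ℝ)^2*(((n+1)+k).choose k:ℝ))
          - ((n:ℝ)+1)*(13*(n:ℝ)^3+27*(n:ℝ)^2+(n:ℝ)-3) * ((n.choose k:ℝ)^2*((n+k).choose k:ℝ)))
        = aperyG n (k+1) - aperyG n k := by
      intro k hk
      rw [← apery_term n k (by omega) (by simpa using Nat.lt_succ_iff.mp (Finset.mem_range.mp hk))]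
      ring
    rw [Finset.sum_congr rfl h, Finset.sum_range_sub (fun k => aperyG n k), g0, gend]
    ring
  have hA : ∑ k ∈ Finset.range (n+2), ((n.choose k:ℝ)^2*((n+k).choose k:ℝ))
      = (aperyPoly n).eval 1 := by
    rw [Finset.sum_range_succ, apery_eval, Nat.choose_succ_self]
    push_cast
    ring
  have hS2 : ∑ k ∈ Finset.range (n+2),
        (k:ℝ)*((k:ℝ)-1)*((n.choose k:ℝ)^2*((n+k).choose k:ℝ))
      = (derivative (derivative (aperyPoly n))).eval 1 := by
    rw [Finset.sum_range_succ, apery_deriv2, Nat.choose_succ_self]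
    push_cast
    ring
  have hU : ∑ k ∈ Finset.range (n+2), (((n+1).choose k:ℝ)^2*(((n+1)+k).choose k:ℝ))
      = (aperyPoly (n+1)).eval 1 := by
    rw [apery_eval]
  rw [hA, hS2, hU] at key
  linarith [key]
end

section
/- For the Franel polynomial g_n(x) = Σ_{k=0}^n C(n,k)^3 x^k, one has (n+1)^2 g_{n+1}(1) = (11n^2+7n+2) g_n(1) − 12(n−1) g_n'(1) + 12 g_n''(1) for all n ≥ 0. -/
open Polynomial

/-- The Franel polynomial. -/
noncomputable def franelPoly (n : ℕ) : Polynomial ℝ :=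
  ∑ k ∈ Finset.range (n + 1), C (((n.choose k) ^ 3 : ℕ) : ℝ) * X ^ k

private lemma franel_eval (n : ℕ) :
    (franelPoly n).eval 1 = ∑ k ∈ Finset.range (n+1), ((n.choose k : ℝ))^3 := by
  simp [franelPoly, eval_finset_sum]

private lemma franel_deriv_eval (n : ℕ) :
    (derivative (franelPoly n)).eval 1
      = ∑ k ∈ Finset.range (n+1), ((n.choose k : ℝ))^3 * k := by
  simp [franelPoly, derivative_sum, derivative_natCast, derivative_pow, eval_finset_sum]

private lemma franel_deriv2_eval (n : ℕ) :
    (derivative (derivative (franelPoly n))).eval 1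
      = ∑ k ∈ Finset.range (n+1), ((n.choose k : ℝ))^3 * k * ((k-1 : ℕ) : ℝ) := by
  simp [franelPoly, derivative_sum, derivative_natCast, derivative_pow, eval_finset_sum,
    mul_assoc]

private lemma franel_step (n k : ℕ) (hk : k ≤ n + 1) :
    ((n:ℝ)+1)^3 * (((n:ℝ)+1)^2 * (((n+1).choose k : ℝ))^3
        - (11*(n:ℝ)^2 + 7*(n:ℝ) + 2 - 12*(n:ℝ)*(k:ℝ) + 12*(k:ℝ)^2) * ((n.choose k : ℝ))^3)
      = (-6*((k:ℝ)+1)^2 + 15*((n:ℝ)+1)*((k:ℝ)+1) - 10*((n:ℝ)+1)^2) * ((k:ℝ)+1)^3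
            * (((n+1).choose (k+1) : ℝ))^3
        - (-6*(k:ℝ)^2 + 15*((n:ℝ)+1)*(k:ℝ) - 10*((n:ℝ)+1)^2) * (k:ℝ)^3
            * (((n+1).choose k : ℝ))^3 := by
  have hc : ((n + 1 - k : ℕ) : ℝ) = (n:ℝ) + 1 - k := by
    rw [Nat.cast_sub hk]; push_cast; ring
  have h1n : (n+1).choose (k+1) * (k+1) = (n+1).choose k * (n+1-k) :=
    Nat.choose_succ_right_eq _ _
  have h2n : (n+1) * n.choose k = (n+1).choose k * (n+1-k) := by
    rw [← h1n, ← Nat.add_one_mul_choose_eq]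
  have e1 : (((n+1).choose (k+1) : ℝ)) * ((k:ℝ)+1) = (((n+1).choose k : ℝ)) * ((n:ℝ)+1-k) := by
    rw [← hc]; exact_mod_cast h1n
  have e2 : ((n:ℝ)+1) * ((n.choose k : ℝ)) = (((n+1).choose k : ℝ)) * ((n:ℝ)+1-k) := by
    rw [← hc]; exact_mod_cast h2n
  have e1c := congrArg (fun x : ℝ => x^3) e1
  have e2c := congrArg (fun x : ℝ => x^3) e2
  simp only [mul_pow] at e1c e2c
  linear_combination
    (-(-6*((k:ℝ)+1)^2 + 15*((n:ℝ)+1)*((k:ℝ)+1) - 10*((n:ℝ)+1)^2)) * e1c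
    + (-(11*(n:ℝ)^2 + 7*(n:ℝ) + 2 - 12*(n:ℝ)*(k:ℝ) + 12*(k:ℝ)^2)) * e2c

theorem franel_mixed_recurrence (n : ℕ) :
    ((n : ℝ) + 1) ^ 2 * (franelPoly (n + 1)).eval 1 =
      (11 * (n : ℝ) ^ 2 + 7 * n + 2) * (franelPoly n).eval 1
        - 12 * ((n : ℝ) - 1) * (derivative (franelPoly n)).eval 1
        + 12 * (derivative (derivative (franelPoly n))).eval 1 := by
  set f : ℕ → ℝ := fun j =>
    (-6*(j:ℝ)^2 + 15*((n:ℝ)+1)*(j:ℝ) - 10*((n:ℝ)+1)^2) * (j:ℝ)^3 * (((n+1).choose j : ℝ))^3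
    with hf
  have key : ∑ k ∈ Finset.range (n+2),
      ((n:ℝ)+1)^3 * (((n:ℝ)+1)^2 * (((n+1).choose k : ℝ))^3
        - (11*(n:ℝ)^2 + 7*(n:ℝ) + 2 - 12*(n:ℝ)*(k:ℝ) + 12*(k:ℝ)^2) * ((n.choose k : ℝ))^3)
      = 0 := by
    have := Finset.sum_range_sub f (n+2)
    have h0 : f 0 = 0 := by simp [hf]
    have hend : f (n+2) = 0 := by
      simp [hf, Nat.choose_eq_zero_of_lt (show n+1 < n+2 by omega)]
    calc ∑ k ∈ Finset.range (n+2),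
          ((n:ℝ)+1)^3 * (((n:ℝ)+1)^2 * (((n+1).choose k : ℝ))^3
            - (11*(n:ℝ)^2 + 7*(n:ℝ) + 2 - 12*(n:ℝ)*(k:ℝ) + 12*(k:ℝ)^2) * ((n.choose k : ℝ))^3)
        = ∑ k ∈ Finset.range (n+2), (f (k+1) - f k) := by
          refine Finset.sum_congr rfl fun k hk => ?_
          have hk' : k ≤ n+1 := by simpa [Nat.lt_succ_iff] using Finset.mem_range.mp hk
          rw [franel_step n k hk']
          simp only [hf]; push_cast; ring
      _ = f (n+2) - f 0 := Finset.sum_range_sub f (n+2)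
      _ = 0 := by rw [h0, hend, sub_zero]
  have hsplit : ((n:ℝ)+1)^3 * (((n:ℝ)+1)^2 * ∑ k ∈ Finset.range (n+2), (((n+1).choose k : ℝ))^3
      - ∑ k ∈ Finset.range (n+2),
          (11*(n:ℝ)^2 + 7*(n:ℝ) + 2 - 12*(n:ℝ)*(k:ℝ) + 12*(k:ℝ)^2) * ((n.choose k : ℝ))^3)
      = 0 := by
    rw [Finset.mul_sum, ← Finset.sum_sub_distrib, ← key, Finset.mul_sum]
  have h3 : ((n:ℝ)+1)^3 ≠ 0 := by positivity
  have hS : ((n:ℝ)+1)^2 * ∑ k ∈ Finset.range (n+2), (((n+1).choose k : ℝ))^3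
      = ∑ k ∈ Finset.range (n+2),
          (11*(n:ℝ)^2 + 7*(n:ℝ) + 2 - 12*(n:ℝ)*(k:ℝ) + 12*(k:ℝ)^2) * ((n.choose k : ℝ))^3 := by
    have := mul_eq_zero.mp hsplit
    rcases this with h | h
    · exact absurd h h3
    · linarith [sub_eq_zero.mp h]
  rw [franel_eval, franel_eval, franel_deriv_eval, franel_deriv2_eval]
  rw [hS, Finset.sum_range_succ, Nat.choose_eq_zero_of_lt (show n < n+1 by omega)]
  rw [Finset.mul_sum, Finset.mul_sum, Finset.mul_sum, ← Finset.sum_sub_distrib,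
    ← Finset.sum_add_distrib]
  simp only [Nat.cast_zero, zero_pow, mul_zero, add_zero, ne_eq, OfNat.ofNat_ne_zero,
    not_false_eq_true]
  refine Finset.sum_congr rfl fun k _ => ?_
  have hk1 : (k:ℝ) * ((k-1 : ℕ) : ℝ) = (k:ℝ)^2 - k := by
    cases k with
    | zero => simp
    | succ m => push_cast [Nat.succ_sub_one]; ring
  linear_combination (-12 * ((n.choose k : ℝ))^3) * hk1
end

section
/- The ratio of consecutive Franel numbers converges: lim_{n→∞} g_{n+1}/g_n = 8, where g_n = Σ_{k=0}^n C(n,k)^3. -/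
open Finset

namespace FranelAux

noncomputable abbrev a (n k : ℕ) : ℤ := (n.choose k : ℤ)

lemma a_nonneg (n k : ℕ) : 0 ≤ a n k := Int.natCast_nonneg _

lemma rel (n k : ℕ) : ((k:ℤ)+1) * a n (k+1) = ((n:ℤ) - k) * a n k := by
  rcases le_or_gt k n with h | h
  · have := Nat.choose_succ_right_eq n k
    have h2 : ((n.choose (k+1) : ℤ)) * ((k:ℤ)+1) = (n.choose k : ℤ) * ((n:ℤ) - (k:ℤ)) := by
      have := congrArg (fun m : ℕ => (m : ℤ)) this
      push_cast [Nat.cast_sub h] at this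
      convert this using 2 <;> push_cast <;> ring
    unfold a; linarith
  · have h1 : n.choose (k+1) = 0 := Nat.choose_eq_zero_of_lt (by omega)
    have h2 : n.choose k = 0 := Nat.choose_eq_zero_of_lt h
    simp [a, h1, h2]

lemma sum_shift (n : ℕ) :
    ∑ k ∈ range (n+1), a n (k+1) ^ 3 = (franel n : ℤ) - 1 := by
  have h0 : ∑ k ∈ range (n+2), a n k ^ 3 = (franel n : ℤ) := by
    rw [Finset.sum_range_succ]
    simp [franel, a, Nat.choose_eq_zero_of_lt (by omega : n < n+1)]
  have h1 := Finset.sum_range_succ' (fun k => a n k ^ 3) (n+1)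
  rw [h0] at h1
  simp [a] at h1 ⊢
  linarith

lemma cast_franel (n : ℕ) : (franel n : ℤ) = ∑ k ∈ range (n+1), a n k ^ 3 := by
  unfold franel a; push_cast; rfl

lemma L1 (n : ℕ) :
    8 * (franel n : ℤ) - (franel (n+1) : ℤ) =
      3 * ∑ k ∈ range (n+1), (a n k + a n (k+1)) * (a n k - a n (k+1))^2 + 3 := by
  have hgn := cast_franel n
  have hg1 : (franel (n+1) : ℤ) = ∑ k ∈ range (n+1), (a n k + a n (k+1))^3 + 1 := by
    rw [cast_franel, Finset.sum_range_succ']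
    have h0 : a (n+1) 0 ^ 3 = 1 := by simp [a]
    rw [h0]
    refine congrArg (· + 1) (Finset.sum_congr rfl fun k _ => ?_)
    have : a (n+1) (k+1) = a n k + a n (k+1) := by
      unfold a; rw [Nat.choose_succ_succ]; push_cast; ring
    rw [this]
  have key : ∑ k ∈ range (n+1),
        ((a n k + a n (k+1))^3 + 3*((a n k + a n (k+1)) * (a n k - a n (k+1))^2))
      = ∑ k ∈ range (n+1), (4 * a n k ^3 + 4 * a n (k+1)^3) :=
    Finset.sum_congr rfl fun k _ => by ring
  rw [Finset.sum_add_distrib, Finset.sum_add_distrib, ← Finset.mul_sum, ← Finset.mul_sum,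
    ← Finset.mul_sum] at key
  have hs := sum_shift n
  linarith [key]

lemma refl1 (n : ℕ) :
    ∑ k ∈ range (n+1), ((n:ℤ) - 2*k) * k * a n k ^ 3
      = ∑ k ∈ range (n+1), (2*(k:ℤ) - n) * ((n:ℤ) - k) * a n k ^ 3 := by
  have h := Finset.sum_range_reflect (fun k => ((n:ℤ) - 2*k) * k * a n k ^ 3) (n+1)
  rw [← h]
  apply Finset.sum_congr rfl
  intro k hk
  have hkn : k ≤ n := Nat.lt_succ_iff.mp (Finset.mem_range.mp hk)
  have h1 : n + 1 - 1 - k = n - k := by omega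
  have h2 : a n (n - k) = a n k := by unfold a; rw [Nat.choose_symm hkn]
  have h3 : ((n - k : ℕ) : ℤ) = (n:ℤ) - k := by push_cast [hkn]; ring
  simp only [h1, h2, h3]
  ring

lemma U_eq (n : ℕ) :
    ∑ k ∈ range (n+1), ((n:ℤ) - 2*k) * ((n:ℤ) - k) * a n k ^ 3
      = ∑ k ∈ range n, ((n:ℤ) - 2*k) * ((k:ℤ) + 1) * a n k ^ 2 * a n (k+1) := by
  have step : ∑ k ∈ range (n+1), ((n:ℤ) - 2*k) * ((n:ℤ) - k) * a n k ^ 3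
      = ∑ k ∈ range (n+1), ((n:ℤ) - 2*k) * ((k:ℤ) + 1) * a n k ^ 2 * a n (k+1) := by
    apply Finset.sum_congr rfl
    intro k _
    linear_combination (-((n:ℤ) - 2*k) * a n k ^ 2) * rel n k
  rw [step, Finset.sum_range_succ]
  have : a n (n+1) = 0 := by
    unfold a; simp [Nat.choose_eq_zero_of_lt (by omega : n < n+1)]
  simp [this]

lemma refl2 (n : ℕ) :
    ∑ k ∈ range n, ((n:ℤ) - 2*k) * ((k:ℤ) + 1) * a n k ^ 2 * a n (k+1)
      = ∑ k ∈ range n, (2*(k:ℤ) + 2 - n) * ((n:ℤ) - k) * a n k * a n (k+1) ^ 2 := by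
  have h := Finset.sum_range_reflect
    (fun k => ((n:ℤ) - 2*k) * ((k:ℤ) + 1) * a n k ^ 2 * a n (k+1)) n
  rw [← h]
  apply Finset.sum_congr rfl
  intro k hk
  have hkn : k < n := Finset.mem_range.mp hk
  have h1 : a n (n - 1 - k) = a n (k+1) := by
    unfold a
    have : n - (k+1) = n - 1 - k := by omega
    rw [← this, Nat.choose_symm (by omega)]
  have h2 : (n - 1 - k) + 1 = n - k := by omega
  have h3 : a n (n - k) = a n k := by unfold a; rw [Nat.choose_symm (by omega)]
  have h4 : ((n - 1 - k : ℕ) : ℤ) = (n:ℤ) - 1 - k := by omega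
  simp only [h1, h2, h3, h4]
  ring

lemma inner_bound (n k : ℕ) (hk : k < n) :
    ((n:ℤ) - 2*k) * ((k:ℤ) + 1) * a n k ^ 2 * a n (k+1)
      + (2*(k:ℤ) + 2 - n) * ((n:ℤ) - k) * a n k * a n (k+1) ^ 2
    ≤ 2 * (n:ℤ) * (a n k * a n (k+1) ^ 2) := by
  set A := a n k with hA'
  set B := a n (k+1) with hB'
  have hA : (0:ℤ) ≤ A := a_nonneg n k
  have hB : (0:ℤ) ≤ B := a_nonneg n (k+1)
  have hrel : ((k:ℤ)+1) * B = ((n:ℤ) - k) * A := rel n k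
  have hkpos : (0:ℤ) < (k:ℤ) + 1 := by positivity
  rw [← mul_le_mul_iff_right₀ hkpos]
  have e1 : ((k:ℤ)+1) * (((n:ℤ) - 2*k) * ((k:ℤ) + 1) * A ^ 2 * B
        + (2*(k:ℤ) + 2 - n) * ((n:ℤ) - k) * A * B ^ 2)
      = A^2 * B * (2*((n:ℤ) - k)^2 - ((n:ℤ)+1) * (((n:ℤ) - 2*k) * ((n:ℤ) - 2*k - 1))) := by
    linear_combination ((2*(k:ℤ) + 2 - (n:ℤ)) * ((n:ℤ) - k) * A * B) * hrel
  have e2 : ((k:ℤ)+1) * (2 * (n:ℤ) * (A * B ^ 2)) = 2 * (n:ℤ) * ((n:ℤ) - k) * (A^2 * B) := by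
    linear_combination (2 * (n:ℤ) * A * B) * hrel
  rw [e1, e2]
  have hd : (0:ℤ) ≤ ((n:ℤ) - 2*k) * ((n:ℤ) - 2*k - 1) := by
    rcases le_or_gt ((n:ℤ) - 2*k) 0 with h | h
    · nlinarith
    · have h1 : (1:ℤ) ≤ (n:ℤ) - 2*k := h
      nlinarith
  have hAB : (0:ℤ) ≤ A^2 * B := by positivity
  have hnk : (0:ℤ) ≤ (n:ℤ) - k := by
    have : (k:ℤ) ≤ n := by exact_mod_cast hk.le
    linarith
  have hknn : (0:ℤ) ≤ (k:ℤ) := Int.natCast_nonneg k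
  nlinarith [mul_nonneg hAB hd, mul_nonneg (mul_nonneg hnk hknn) hAB]

lemma sum_ab2_le (n : ℕ) :
    ∑ k ∈ range n, a n k * a n (k+1) ^ 2 ≤ (franel n : ℤ) := by
  have hpt : ∀ k ∈ range n, 3 * (a n k * a n (k+1) ^ 2) ≤ a n k ^ 3 + 2 * a n (k+1) ^ 3 := by
    intro k _
    have hA := a_nonneg n k
    have hB := a_nonneg n (k+1)
    nlinarith [mul_nonneg (sq_nonneg (a n k - a n (k+1))) (by linarith : (0:ℤ) ≤ a n k + 2 * a n (k+1))]
  have h1 : ∑ k ∈ range n, 3 * (a n k * a n (k+1) ^ 2)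
      ≤ ∑ k ∈ range n, (a n k ^ 3 + 2 * a n (k+1) ^ 3) := Finset.sum_le_sum hpt
  rw [Finset.sum_add_distrib, ← Finset.mul_sum, ← Finset.mul_sum] at h1
  have h2 : ∑ k ∈ range n, a n k ^ 3 ≤ (franel n : ℤ) := by
    rw [cast_franel]
    apply Finset.sum_le_sum_of_subset_of_nonneg (Finset.range_subset_range.mpr (by omega))
    intro k _ _
    have := a_nonneg n k; positivity
  have h3 : ∑ k ∈ range n, a n (k+1) ^ 3 ≤ (franel n : ℤ) - 1 := by
    rw [← sum_shift n]
    apply Finset.sum_le_sum_of_subset_of_nonneg (Finset.range_subset_range.mpr (by omega))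
    intro k _ _
    have := a_nonneg n (k+1); positivity
  linarith

lemma M_bound (n : ℕ) :
    ∑ k ∈ range (n+1), ((n:ℤ) - 2*k)^2 * a n k ^ 3 ≤ 2 * n * (franel n : ℤ) := by
  have hM2 : ∑ k ∈ range (n+1), ((n:ℤ) - 2*k)^2 * a n k ^ 3
      = 2 * ∑ k ∈ range (n+1), ((n:ℤ) - 2*k) * ((n:ℤ) - k) * a n k ^ 3 := by
    have hpt : ∑ k ∈ range (n+1), ((n:ℤ) - 2*k)^2 * a n k ^ 3
        = ∑ k ∈ range (n+1), (((n:ℤ) - 2*k) * ((n:ℤ) - k) * a n k ^ 3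
            - ((n:ℤ) - 2*k) * k * a n k ^ 3) :=
      Finset.sum_congr rfl fun k _ => by ring
    rw [hpt, Finset.sum_sub_distrib, refl1]
    have : ∑ k ∈ range (n+1), (2*(k:ℤ) - n) * ((n:ℤ) - k) * a n k ^ 3
        = - ∑ k ∈ range (n+1), ((n:ℤ) - 2*k) * ((n:ℤ) - k) * a n k ^ 3 := by
      rw [← Finset.sum_neg_distrib]
      exact Finset.sum_congr rfl fun k _ => by ring
    rw [this]
    ring
  rw [hM2, U_eq]
  -- 2 * U = form1 + form2, bounded by sum of pointwise bounds
  have hsplit : 2 * ∑ k ∈ range n, ((n:ℤ) - 2*k) * ((k:ℤ) + 1) * a n k ^ 2 * a n (k+1)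
      = ∑ k ∈ range n, (((n:ℤ) - 2*k) * ((k:ℤ) + 1) * a n k ^ 2 * a n (k+1)
          + (2*(k:ℤ) + 2 - n) * ((n:ℤ) - k) * a n k * a n (k+1) ^ 2) := by
    rw [Finset.sum_add_distrib, ← refl2]
    ring
  rw [hsplit]
  have step1 : ∑ k ∈ range n, (((n:ℤ) - 2*k) * ((k:ℤ) + 1) * a n k ^ 2 * a n (k+1)
          + (2*(k:ℤ) + 2 - n) * ((n:ℤ) - k) * a n k * a n (k+1) ^ 2)
      ≤ ∑ k ∈ range n, 2 * (n:ℤ) * (a n k * a n (k+1) ^ 2) :=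
    Finset.sum_le_sum fun k hk => inner_bound n k (Finset.mem_range.mp hk)
  have step2 : ∑ k ∈ range n, 2 * (n:ℤ) * (a n k * a n (k+1) ^ 2)
      ≤ 2 * n * (franel n : ℤ) := by
    rw [← Finset.mul_sum]
    exact mul_le_mul_of_nonneg_left (sum_ab2_le n) (by positivity)
  linarith

lemma caseA (n k : ℕ) (hk : k < n) (h : n ≤ 2*k+1) :
    ((n:ℤ)+1)^2 * ((a n k + a n (k+1)) * (a n k - a n (k+1))^2)
      ≤ 8 * (a n k ^ 3 * ((n:ℤ) - 1 - 2*k)^2) := by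
  set A := a n k with hA'
  set B := a n (k+1) with hB'
  have hA : (0:ℤ) ≤ A := a_nonneg n k
  have hrel : ((k:ℤ)+1) * B = ((n:ℤ) - k) * A := rel n k
  have hkpos : (0:ℤ) < ((k:ℤ) + 1)^3 := by positivity
  rw [← mul_le_mul_iff_right₀ hkpos]
  have ha : ((k:ℤ)+1) * (A + B) = ((n:ℤ)+1) * A := by linear_combination hrel
  have hb : ((k:ℤ)+1) * (A - B) = (2*(k:ℤ)+1-(n:ℤ)) * A := by linear_combination -hrel
  have e1 : ((k:ℤ)+1)^3 * (((n:ℤ)+1)^2 * ((A + B) * (A - B)^2))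
      = ((n:ℤ)+1)^3 * ((2*(k:ℤ)+1-(n:ℤ))^2 * A^3) := by
    have expand : ((k:ℤ)+1)^3 * (((n:ℤ)+1)^2 * ((A + B) * (A - B)^2))
        = ((n:ℤ)+1)^2 * ((((k:ℤ)+1) * (A + B)) * (((k:ℤ)+1) * (A - B))^2) := by ring
    rw [expand, ha, hb]; ring
  rw [e1]
  have e2 : ((k:ℤ)+1)^3 * (8 * (A ^ 3 * ((n:ℤ) - 1 - 2*k)^2))
      = 8 * ((k:ℤ)+1)^3 * ((2*(k:ℤ)+1-(n:ℤ))^2 * A^3) := by ring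
  rw [e2]
  apply mul_le_mul_of_nonneg_right _ (by positivity)
  have hcube : ((n:ℤ)+1)^3 ≤ (2*((k:ℤ)+1))^3 := by
    apply pow_le_pow_left₀ (by positivity)
    omega
  calc ((n:ℤ)+1)^3 ≤ (2*((k:ℤ)+1))^3 := hcube
    _ = 8 * ((k:ℤ)+1)^3 := by ring

lemma tsym (n k : ℕ) (hk : k < n) :
    (a n (n-1-k) + a n ((n-1-k)+1)) * (a n (n-1-k) - a n ((n-1-k)+1))^2
      = (a n k + a n (k+1)) * (a n k - a n (k+1))^2 := by
  have h1 : a n (n - 1 - k) = a n (k+1) := by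
    unfold a
    have : n - (k+1) = n - 1 - k := by omega
    rw [← this, Nat.choose_symm (by omega)]
  have h2 : (n - 1 - k) + 1 = n - k := by omega
  have h3 : a n (n - k) = a n k := by unfold a; rw [Nat.choose_symm (by omega)]
  rw [h2, h1, h3]
  ring

lemma E_pointwise (n k : ℕ) (hk : k < n) :
    ((n:ℤ)+1)^2 * ((a n k + a n (k+1)) * (a n k - a n (k+1))^2)
      ≤ 8 * (a n k ^ 3 * ((n:ℤ) - 1 - 2*k)^2
           + a n (n-1-k) ^ 3 * ((n:ℤ) - 1 - 2*((n-1-k : ℕ):ℤ))^2) := by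
  have hnn1 : (0:ℤ) ≤ a n k ^ 3 * ((n:ℤ) - 1 - 2*k)^2 := by
    have := a_nonneg n k; positivity
  have hnn2 : (0:ℤ) ≤ a n (n-1-k) ^ 3 * ((n:ℤ) - 1 - 2*((n-1-k : ℕ):ℤ))^2 := by
    have := a_nonneg n (n-1-k); positivity
  rcases le_or_gt n (2*k+1) with h | h
  · have := caseA n k hk h
    linarith
  · have hk' : n - 1 - k < n := by omega
    have h' : n ≤ 2*(n-1-k)+1 := by omega
    have hca := caseA n (n-1-k) hk' h'
    rw [tsym n k hk] at hca
    linarith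

lemma E_bound (n : ℕ) :
    ((n:ℤ)+1)^2 * ∑ k ∈ range n, (a n k + a n (k+1)) * (a n k - a n (k+1))^2
      ≤ 16 * ∑ k ∈ range n, a n k ^ 3 * ((n:ℤ) - 1 - 2*k)^2 := by
  rw [Finset.mul_sum]
  have h1 : ∑ k ∈ range n, ((n:ℤ)+1)^2 * ((a n k + a n (k+1)) * (a n k - a n (k+1))^2)
      ≤ ∑ k ∈ range n, 8 * (a n k ^ 3 * ((n:ℤ) - 1 - 2*k)^2
           + a n (n-1-k) ^ 3 * ((n:ℤ) - 1 - 2*((n-1-k : ℕ):ℤ))^2) :=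
    Finset.sum_le_sum fun k hk => E_pointwise n k (Finset.mem_range.mp hk)
  have h2 : ∑ k ∈ range n, a n (n-1-k) ^ 3 * ((n:ℤ) - 1 - 2*((n-1-k : ℕ):ℤ))^2
      = ∑ k ∈ range n, a n k ^ 3 * ((n:ℤ) - 1 - 2*k)^2 :=
    Finset.sum_range_reflect (fun k => a n k ^ 3 * ((n:ℤ) - 1 - 2*(k:ℤ))^2) n
  calc ∑ k ∈ range n, ((n:ℤ)+1)^2 * ((a n k + a n (k+1)) * (a n k - a n (k+1))^2)
      ≤ _ := h1
    _ = 8 * ∑ k ∈ range n, a n k ^ 3 * ((n:ℤ) - 1 - 2*k)^2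
        + 8 * ∑ k ∈ range n, a n (n-1-k) ^ 3 * ((n:ℤ) - 1 - 2*((n-1-k : ℕ):ℤ))^2 := by
        rw [← Finset.mul_sum, Finset.sum_add_distrib]; ring
    _ = 16 * ∑ k ∈ range n, a n k ^ 3 * ((n:ℤ) - 1 - 2*k)^2 := by rw [h2]; ring

lemma g_ge (n : ℕ) : (n:ℤ) + 1 ≤ (franel n : ℤ) := by
  have : (n+1 : ℕ) ≤ franel n := by
    have : ∑ k ∈ range (n+1), 1 ≤ ∑ k ∈ range (n+1), (n.choose k)^3 := by
      apply Finset.sum_le_sum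
      intro k hk
      have h : 0 < n.choose k := Nat.choose_pos (Nat.lt_succ_iff.mp (Finset.mem_range.mp hk))
      exact Nat.one_le_iff_ne_zero.mpr (by positivity)
    simpa [franel] using this
  exact_mod_cast this

lemma HIGH (n : ℕ) : (franel (n+1) : ℤ) ≤ 8 * (franel n : ℤ) := by
  have h := L1 n
  have hs : 0 ≤ ∑ k ∈ range (n+1), (a n k + a n (k+1)) * (a n k - a n (k+1))^2 := by
    apply Finset.sum_nonneg
    intro k _
    have := a_nonneg n k; have := a_nonneg n (k+1)
    positivity
  linarith

lemma LOW (n : ℕ) :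
    ((n:ℤ)+1) * (8 * (franel n : ℤ) - (franel (n+1) : ℤ)) ≤ 198 * (franel n : ℤ) := by
  have f1 : 8 * (franel n : ℤ) - (franel (n+1) : ℤ)
      = 3 * ∑ k ∈ range n, (a n k + a n (k+1)) * (a n k - a n (k+1))^2 + 6 := by
    have hL1 := L1 n
    have hS : ∑ k ∈ range (n+1), (a n k + a n (k+1)) * (a n k - a n (k+1))^2
        = ∑ k ∈ range n, (a n k + a n (k+1)) * (a n k - a n (k+1))^2 + 1 := by
      rw [Finset.sum_range_succ]
      have h1 : a n n = 1 := by simp [a]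
      have h2 : a n (n+1) = 0 := by
        simp [a, Nat.choose_eq_zero_of_lt (by omega : n < n+1)]
      rw [h1, h2]; ring
    rw [hS] at hL1
    linarith
  have f2 := E_bound n
  have f3 : ∑ k ∈ range n, a n k ^ 3 * ((n:ℤ) - 1 - 2*k)^2
      ≤ ∑ k ∈ range (n+1), a n k ^ 3 * ((n:ℤ) - 1 - 2*k)^2 := by
    apply Finset.sum_le_sum_of_subset_of_nonneg (Finset.range_subset_range.mpr (by omega))
    intro k _ _
    have := a_nonneg n k; positivity
  have f4 : ∑ k ∈ range (n+1), a n k ^ 3 * ((n:ℤ) - 1 - 2*k)^2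
      ≤ 2 * ∑ k ∈ range (n+1), ((n:ℤ) - 2*k)^2 * a n k ^ 3 + 2 * (franel n : ℤ) := by
    have hpt : ∀ k ∈ range (n+1), a n k ^ 3 * ((n:ℤ) - 1 - 2*k)^2
        ≤ 2 * (((n:ℤ) - 2*k)^2 * a n k ^ 3) + 2 * a n k ^ 3 := by
      intro k _
      nlinarith [mul_nonneg (pow_nonneg (a_nonneg n k) 3) (sq_nonneg ((n:ℤ) - 2*k + 1))]
    calc ∑ k ∈ range (n+1), a n k ^ 3 * ((n:ℤ) - 1 - 2*k)^2
        ≤ ∑ k ∈ range (n+1), (2 * (((n:ℤ) - 2*k)^2 * a n k ^ 3) + 2 * a n k ^ 3) :=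
          Finset.sum_le_sum hpt
      _ = 2 * ∑ k ∈ range (n+1), ((n:ℤ) - 2*k)^2 * a n k ^ 3 + 2 * (franel n : ℤ) := by
          rw [Finset.sum_add_distrib, ← Finset.mul_sum, ← Finset.mul_sum, ← cast_franel]
  have f5 := M_bound n
  have f6 := g_ge n
  have hg0 : (0:ℤ) ≤ (franel n : ℤ) := by positivity
  have hn0 : (0:ℤ) ≤ (n:ℤ) := Int.natCast_nonneg n
  have hprod : 6 * ((n:ℤ)+1) * ((n:ℤ)+1) ≤ 6 * ((n:ℤ)+1) * (franel n : ℤ) :=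
    mul_le_mul_of_nonneg_left f6 (by positivity)
  have big : ((n:ℤ)+1) * (((n:ℤ)+1) * (8 * (franel n : ℤ) - (franel (n+1) : ℤ)))
      ≤ ((n:ℤ)+1) * (198 * (franel n : ℤ)) := by
    nlinarith [f1, f2, f3, f4, f5, hprod, hg0, hn0]
  exact le_of_mul_le_mul_left big (by positivity)

end FranelAux

theorem franel_ratio_limit :
    Filter.Tendsto (fun n : ℕ => (franel (n + 1) : ℝ) / (franel n : ℝ))
      Filter.atTop (nhds 8) := by
  have hposn : ∀ n : ℕ, 0 < franel n := by
    intro n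
    have := FranelAux.g_ge n
    omega
  have hpos : ∀ n : ℕ, (0:ℝ) < (franel n : ℝ) := by
    intro n
    exact_mod_cast hposn n
  have hub : ∀ n : ℕ, (franel (n+1) : ℝ) / (franel n : ℝ) ≤ 8 := by
    intro n
    rw [div_le_iff₀ (hpos n)]
    have h := FranelAux.HIGH n
    have : (franel (n+1) : ℝ) ≤ 8 * (franel n : ℝ) := by exact_mod_cast h
    linarith
  have hlb : ∀ n : ℕ, 8 - 198 / ((n:ℝ)+1) ≤ (franel (n+1) : ℝ) / (franel n : ℝ) := by
    intro n
    have hg := hpos n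
    have hn : (0:ℝ) < (n:ℝ) + 1 := by positivity
    have hL : ((n:ℝ)+1) * (8 * (franel n : ℝ) - (franel (n+1) : ℝ)) ≤ 198 * (franel n : ℝ) := by
      exact_mod_cast FranelAux.LOW n
    rw [le_div_iff₀ hg]
    have h2 : 8 * (franel n : ℝ) - (franel (n+1) : ℝ) ≤ 198 * (franel n : ℝ) / ((n:ℝ)+1) := by
      rw [le_div_iff₀ hn]
      nlinarith
    have expand : (8 - 198 / ((n:ℝ)+1)) * (franel n : ℝ)
        = 8 * (franel n : ℝ) - 198 * (franel n : ℝ) / ((n:ℝ)+1) := by ring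
    linarith
  have hlim : Filter.Tendsto (fun n : ℕ => 8 - 198 / ((n:ℝ)+1)) Filter.atTop (nhds 8) := by
    have h0 : Filter.Tendsto (fun n : ℕ => (198:ℝ) / ((n:ℝ)+1)) Filter.atTop (nhds 0) := by
      have h1 := tendsto_one_div_add_atTop_nhds_zero_nat.const_mul (198:ℝ)
      simpa [div_eq_mul_inv] using h1
    simpa using tendsto_const_nhds.sub h0
  exact tendsto_of_tendsto_of_tendsto_of_le_of_le hlim tendsto_const_nhds hlb hub
end

section
/- For the Apéry polynomial f_n(x) = Σ_{k=0}^n C(n,k)^2 C(n+k,k) x^k, the normalized mean μ_n/n = f_n'(1)/(n f_n(1)) converges to (√5 − 1)/2 as n → ∞. -/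
open Polynomial

open Finset Filter

/-- The Apéry coefficients as natural numbers. -/
def apN (n k : ℕ) : ℕ := n.choose k ^ 2 * (n + k).choose k

lemma apN_pos {n k : ℕ} (h : k ≤ n) : 0 < apN n k :=
  Nat.mul_pos (pow_pos (Nat.choose_pos h) 2) (Nat.choose_pos (Nat.le_add_left k n))

lemma apN_eq_zero {n k : ℕ} (h : n < k) : apN n k = 0 := by
  simp [apN, Nat.choose_eq_zero_of_lt h]

lemma apN_rec (n k : ℕ) :
    apN n (k+1) * (k+1)^3 = apN n k * (n-k)^2 * (n+k+1) := by
  have h1 := Nat.choose_succ_right_eq n k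
  have h2 := Nat.add_one_mul_choose_eq (n+k) k
  have e : n + (k+1) = (n+k)+1 := by omega
  calc apN n (k+1) * (k+1)^3
      = (n.choose (k+1) * (k+1))^2 * ((n+k+1).choose (k+1) * (k+1)) := by
        simp only [apN, e]; ring
    _ = (n.choose k * (n-k))^2 * ((n+k+1) * (n+k).choose k) := by
        rw [h1]; congr 1
        have : (n+k+1).choose (k+1) * (k+1) = (n+k+1) * (n+k).choose k := by
          simpa [Nat.succ_eq_add_one] using h2.symm
        rw [this]
    _ = apN n k * (n-k)^2 * (n+k+1) := by simp only [apN]; ring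

lemma apN_rec_real {n k : ℕ} (h : k < n) :
    (apN n (k+1) : ℝ) * ((k:ℝ)+1)^3 = (apN n k : ℝ) * ((n:ℝ)-(k:ℝ))^2 * ((n:ℝ)+(k:ℝ)+1) := by
  have := apN_rec n k
  have hcast : ((n - k : ℕ) : ℝ) = (n:ℝ) - (k:ℝ) := Nat.cast_sub h.le
  have h2 : ((apN n (k+1) * (k+1)^3 : ℕ) : ℝ) = ((apN n k * (n-k)^2 * (n+k+1) : ℕ) : ℝ) := by
    exact_mod_cast congrArg (Nat.cast : ℕ → ℝ) this
  push_cast [hcast] at h2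
  linarith [h2]

/-- Right-side ratio estimate. -/
lemma ratio_right {s : ℝ} (hs0 : 0 < s) (hs1 : s < 1) {n k : ℕ}
    (hn : 12 ≤ (s^3 - (1-s)^2*(1+s)) * n) (hgap : (1-s)^2*(1+s) < s^3)
    (hk : s * n ≤ (k:ℝ)) :
    2*s^3*(apN n (k+1) : ℝ) ≤ ((1-s)^2*(1+s) + s^3) * (apN n k : ℝ) := by
  have hs3 : (0:ℝ) < s^3 := by positivity
  have hA : (0:ℝ) ≤ (apN n k : ℝ) := Nat.cast_nonneg _
  by_cases hkn : n ≤ k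
  · rw [apN_eq_zero (by omega : n < k+1)]
    have h1 : (0:ℝ) ≤ (1-s)^2*(1+s) := mul_nonneg (sq_nonneg _) (by linarith)
    have := mul_nonneg (add_nonneg h1 hs3.le) hA
    push_cast
    linarith
  · push_neg at hkn
    have hn0 : 0 < n := lt_of_le_of_lt (Nat.zero_le k) hkn
    set m : ℝ := (n:ℝ) with hm
    set y : ℝ := (k:ℝ) + 1 with hy
    have hk0 : (0:ℝ) ≤ (k:ℝ) := Nat.cast_nonneg _
    have hy1 : s*m < y := by rw [hy]; linarith
    have hy2 : y ≤ m := by rw [hy, hm]; exact_mod_cast Nat.succ_le_of_lt hkn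
    have hm1 : (1:ℝ) ≤ m := by rw [hm]; exact_mod_cast hn0
    have hy0 : (1:ℝ) ≤ y := by rw [hy]; linarith
    -- step B : main polynomial inequality
    have hsy : s*y ≤ y := by nlinarith
    have hB : (0:ℝ) ≤ y^2*(1-s) + s*y*(m-s*y) + s^2*m*(m-y) := by
      have t1 : (0:ℝ) ≤ y^2*(1-s) := mul_nonneg (sq_nonneg _) (by linarith)
      have t2 : (0:ℝ) ≤ s*y*(m-s*y) := mul_nonneg (mul_nonneg hs0.le (by linarith)) (by linarith)
      have t3 : (0:ℝ) ≤ s^2*m*(m-y) := mul_nonneg (mul_nonneg (sq_nonneg _) (by linarith)) (by linarith)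
      linarith
    have stepB : (m-y)^2*(m+y)*s^3 ≤ (1-s)^2*(1+s)*y^3 := by
      have hid : (1-s)^2*(1+s)*y^3 - (m-y)^2*(m+y)*s^3
          = (y - s*m)*(y^2*(1-s) + s*y*(m-s*y) + s^2*m*(m-y)) := by ring
      have := mul_nonneg (sub_nonneg.mpr hy1.le) hB
      linarith
    -- step C
    have stepC : (m-y+1)^2*(m+y) ≤ (m-y)^2*(m+y) + 6*m^2 := by
      nlinarith [sq_nonneg (m-1), sq_nonneg (y-1)]
    -- step D
    have stepD : 12*m^2 ≤ (s^3 - (1-s)^2*(1+s))*m^3 := by nlinarith [sq_nonneg m]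
    -- step E
    have stepE : s^3*m^3 ≤ y^3 := by
      calc s^3*m^3 = (s*m)^3 := by ring
        _ ≤ y^3 := pow_le_pow_left₀ (by positivity) hy1.le 3
    have key : 2*s^3*((m-(k:ℝ))^2*(m+(k:ℝ)+1)) ≤ ((1-s)^2*(1+s) + s^3)*y^3 := by
      have e1 : (m-(k:ℝ))^2*(m+(k:ℝ)+1) = (m-y+1)^2*(m+y) := by rw [hy]; ring
      rw [e1]
      have c1 : 2*s^3*((m-y+1)^2*(m+y)) ≤ 2*s^3*((m-y)^2*(m+y)) + 12*(s^3*m^2) := by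
        calc 2*s^3*((m-y+1)^2*(m+y)) ≤ 2*s^3*((m-y)^2*(m+y) + 6*m^2) :=
              mul_le_mul_of_nonneg_left stepC (by positivity : (0:ℝ) ≤ 2*s^3)
          _ = 2*s^3*((m-y)^2*(m+y)) + 12*(s^3*m^2) := by ring
      have c2 : 12*(s^3*m^2) ≤ (s^3-(1-s)^2*(1+s))*y^3 := by
        calc 12*(s^3*m^2) = s^3*(12*m^2) := by ring
          _ ≤ s^3*((s^3-(1-s)^2*(1+s))*m^3) := mul_le_mul_of_nonneg_left stepD hs3.le
          _ = (s^3-(1-s)^2*(1+s))*(s^3*m^3) := by ring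
          _ ≤ (s^3-(1-s)^2*(1+s))*y^3 := mul_le_mul_of_nonneg_left stepE (by linarith)
      linarith [c1, c2, stepB]
    have hrec := apN_rec_real hkn
    have hy3 : (0:ℝ) < ((k:ℝ)+1)^3 := by positivity
    have final : 2*s^3*(apN n (k+1) : ℝ) * ((k:ℝ)+1)^3
        ≤ ((1-s)^2*(1+s) + s^3) * (apN n k : ℝ) * ((k:ℝ)+1)^3 := by
      calc 2*s^3*(apN n (k+1) : ℝ) * ((k:ℝ)+1)^3
          = 2*s^3*((apN n (k+1) : ℝ) * ((k:ℝ)+1)^3) := by ring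
        _ = (apN n k : ℝ) * (2*s^3*((m-(k:ℝ))^2*(m+(k:ℝ)+1))) := by rw [hrec]; ring
        _ ≤ (apN n k : ℝ) * (((1-s)^2*(1+s) + s^3)*y^3) := mul_le_mul_of_nonneg_left key hA
        _ = ((1-s)^2*(1+s) + s^3) * (apN n k : ℝ) * ((k:ℝ)+1)^3 := by rw [hy]; ring
    exact le_of_mul_le_mul_right final hy3

/-- Left-side ratio estimate. -/
lemma ratio_left {s : ℝ} (hs0 : 0 < s) (hs1 : s < 1) {n k : ℕ}
    (hk : (k:ℝ) + 1 ≤ s * n) :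
    (1-s)^2*(1+s) * (apN n k : ℝ) ≤ s^3 * (apN n (k+1) : ℝ) := by
  have hk0 : (0:ℝ) ≤ (k:ℝ) := Nat.cast_nonneg _
  have hkn : k < n := by
    have : (k:ℝ) < (n:ℝ) := by nlinarith [Nat.cast_nonneg (α := ℝ) n]
    exact_mod_cast this
  set m : ℝ := (n:ℝ) with hm
  set y : ℝ := (k:ℝ) + 1 with hy
  have hy1 : y ≤ s*m := hk
  have hy0 : (1:ℝ) ≤ y := by rw [hy]; linarith
  have hm0 : (0:ℝ) < m := by
    have : 0 < n := lt_of_le_of_lt (Nat.zero_le k) hkn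
    rw [hm]; exact_mod_cast this
  have hsm : s*m ≤ m := by nlinarith
  have hy2 : y ≤ m := le_trans hy1 hsm
  have hsy : s*y ≤ y := by nlinarith
  have hA : (0:ℝ) ≤ (apN n k : ℝ) := Nat.cast_nonneg _
  have hB : (0:ℝ) ≤ y^2*(1-s) + s*y*(m-s*y) + s^2*m*(m-y) := by
    have t1 : (0:ℝ) ≤ y^2*(1-s) := mul_nonneg (sq_nonneg _) (by linarith)
    have t2 : (0:ℝ) ≤ s*y*(m-s*y) := mul_nonneg (mul_nonneg hs0.le (by linarith)) (by linarith)
    have t3 : (0:ℝ) ≤ s^2*m*(m-y) := mul_nonneg (mul_nonneg (sq_nonneg _) (by linarith)) (by linarith)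
    linarith
  have stepB : (1-s)^2*(1+s)*y^3 ≤ (m-y)^2*(m+y)*s^3 := by
    have hid : (1-s)^2*(1+s)*y^3 - (m-y)^2*(m+y)*s^3
        = (y - s*m)*(y^2*(1-s) + s*y*(m-s*y) + s^2*m*(m-y)) := by ring
    have := mul_nonneg (sub_nonneg.mpr hy1) hB
    nlinarith [mul_nonpos_of_nonpos_of_nonneg (sub_nonpos.mpr hy1) hB, hid]
  have stepUp : (m-y)^2*(m+y)*s^3 ≤ (m-y+1)^2*(m+y)*s^3 := by
    have h1 : (m-y)^2*(m+y) ≤ (m-y+1)^2*(m+y) := by nlinarith [sq_nonneg (m-y)]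
    exact mul_le_mul_of_nonneg_right h1 (by positivity)
  have hrec := apN_rec_real hkn
  have hy3 : (0:ℝ) < ((k:ℝ)+1)^3 := by positivity
  have final : (1-s)^2*(1+s)*(apN n k:ℝ) * ((k:ℝ)+1)^3 ≤ s^3*(apN n (k+1):ℝ) * ((k:ℝ)+1)^3 := by
    calc (1-s)^2*(1+s)*(apN n k:ℝ) * ((k:ℝ)+1)^3
        = (apN n k:ℝ) * ((1-s)^2*(1+s)*y^3) := by rw [hy]; ring
      _ ≤ (apN n k:ℝ) * ((m-y+1)^2*(m+y)*s^3) := mul_le_mul_of_nonneg_left (stepB.trans stepUp) hA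
      _ = s^3 * ((apN n k:ℝ) * (m-(k:ℝ))^2 * (m+(k:ℝ)+1)) := by rw [hy]; ring
      _ = s^3 * ((apN n (k+1):ℝ) * ((k:ℝ)+1)^3) := by rw [hrec]
      _ = s^3*(apN n (k+1):ℝ) * ((k:ℝ)+1)^3 := by ring
  exact le_of_mul_le_mul_right final hy3

lemma chain_right {n K : ℕ} {q : ℝ} (hq0 : 0 ≤ q)
    (hstep : ∀ k, K ≤ k → (apN n (k+1) : ℝ) ≤ q * apN n k) :
    ∀ k, K ≤ k → (apN n k : ℝ) ≤ q ^ (k - K) * apN n K := by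
  intro k hk
  induction k, hk using Nat.le_induction with
  | base => simp
  | succ k hk ih =>
    have h1 : (apN n (k+1) : ℝ) ≤ q * apN n k := hstep k hk
    have h2 : q * (apN n k : ℝ) ≤ q * (q ^ (k - K) * apN n K) :=
      mul_le_mul_of_nonneg_left ih hq0
    have e : k + 1 - K = (k - K) + 1 := by omega
    rw [e, pow_succ]
    calc (apN n (k+1) : ℝ) ≤ q * (q ^ (k - K) * apN n K) := h1.trans h2
      _ = q ^ (k - K) * q * apN n K := by ring

lemma chain_left {n L : ℕ} {q : ℝ} (hq0 : 0 ≤ q)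
    (hstep : ∀ k, k < L → (apN n k : ℝ) ≤ q * apN n (k+1)) :
    ∀ k, k ≤ L → (apN n k : ℝ) ≤ q ^ (L - k) * apN n L := by
  have main : ∀ d k, k + d = L → (apN n k : ℝ) ≤ q ^ d * apN n L := by
    intro d
    induction d with
    | zero => intro k hk; simp [show k = L by omega]
    | succ d ih =>
      intro k hk
      have h1 : (apN n k : ℝ) ≤ q * apN n (k+1) := hstep k (by omega)
      have h2 := ih (k+1) (by omega)
      calc (apN n k : ℝ) ≤ q * apN n (k+1) := h1
        _ ≤ q * (q ^ d * apN n L) := mul_le_mul_of_nonneg_left h2 hq0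
        _ = q ^ (d+1) * apN n L := by ring
  intro k hk
  have := main (L - k) k (by omega)
  exact this

lemma geom_aux {q : ℝ} (hq0 : 0 ≤ q) (hq1 : q < 1) (N : ℕ) :
    ∑ i ∈ Finset.range N, q ^ i ≤ (1 - q)⁻¹ := by
  have h1 : 0 < 1 - q := by linarith
  rw [geom_sum_eq (ne_of_lt hq1)]
  rw [div_le_iff_of_neg (by linarith : q - 1 < 0)]
  have : 0 ≤ q ^ N := pow_nonneg hq0 N
  calc (1 - q)⁻¹ * (q - 1) = -((1-q) * (1-q)⁻¹) := by ring
    _ = -1 := by rw [mul_inv_cancel₀ (ne_of_gt h1)]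
    _ ≤ q ^ N - 1 := by linarith

lemma sum_tail_le {n K M : ℕ} {q : ℝ} (hq0 : 0 ≤ q) (hq1 : q < 1) (hKM : K ≤ M)
    (hstep : ∀ k, K ≤ k → (apN n (k+1) : ℝ) ≤ q * apN n k) :
    ∑ k ∈ Finset.Ico M (n+1), (apN n k : ℝ) ≤ q ^ (M - K) * (1 - q)⁻¹ * apN n K := by
  have hAK : (0:ℝ) ≤ (apN n K : ℝ) := Nat.cast_nonneg _
  have h1 : ∀ k ∈ Finset.Ico M (n+1), (apN n k : ℝ) ≤ q ^ (M - K) * q ^ (k - M) * apN n K := by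
    intro k hk
    have hMk := (Finset.mem_Ico.1 hk).1
    have h2 := chain_right hq0 hstep k (hKM.trans hMk)
    have e : (M - K) + (k - M) = k - K := by omega
    rw [← pow_add, e]
    exact h2
  calc ∑ k ∈ Finset.Ico M (n+1), (apN n k : ℝ)
      ≤ ∑ k ∈ Finset.Ico M (n+1), q ^ (M - K) * q ^ (k - M) * apN n K := Finset.sum_le_sum h1
    _ = q ^ (M - K) * (∑ k ∈ Finset.Ico M (n+1), q ^ (k - M)) * apN n K := by
        rw [← Finset.sum_mul, ← Finset.mul_sum]
    _ ≤ q ^ (M - K) * (1 - q)⁻¹ * apN n K := by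
        apply mul_le_mul_of_nonneg_right _ hAK
        apply mul_le_mul_of_nonneg_left _ (pow_nonneg hq0 _)
        rw [Finset.sum_Ico_eq_sum_range]
        have e : ∀ i, (M + i) - M = i := by omega
        calc ∑ i ∈ Finset.range (n + 1 - M), q ^ ((M + i) - M)
            = ∑ i ∈ Finset.range (n + 1 - M), q ^ i := by
              apply Finset.sum_congr rfl; intro i _; rw [e i]
          _ ≤ (1 - q)⁻¹ := geom_aux hq0 hq1 _

lemma sum_head_le {n L M : ℕ} {q : ℝ} (hq0 : 0 ≤ q) (hq1 : q < 1) (hML : M ≤ L)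
    (hstep : ∀ k, k < L → (apN n k : ℝ) ≤ q * apN n (k+1)) :
    ∑ k ∈ Finset.range (M+1), (apN n k : ℝ) ≤ q ^ (L - M) * (1 - q)⁻¹ * apN n L := by
  have hAL : (0:ℝ) ≤ (apN n L : ℝ) := Nat.cast_nonneg _
  have h1 : ∀ k ∈ Finset.range (M+1), (apN n k : ℝ) ≤ q ^ (L - M) * q ^ (M - k) * apN n L := by
    intro k hk
    have hkM : k ≤ M := by simpa [Nat.lt_succ_iff] using Finset.mem_range.1 hk
    have h2 := chain_left hq0 hstep k (hkM.trans hML)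
    have e : (L - M) + (M - k) = L - k := by omega
    rw [← pow_add, e]
    exact h2
  calc ∑ k ∈ Finset.range (M+1), (apN n k : ℝ)
      ≤ ∑ k ∈ Finset.range (M+1), q ^ (L - M) * q ^ (M - k) * apN n L := Finset.sum_le_sum h1
    _ = q ^ (L - M) * (∑ k ∈ Finset.range (M+1), q ^ (M - k)) * apN n L := by
        rw [← Finset.sum_mul, ← Finset.mul_sum]
    _ ≤ q ^ (L - M) * (1 - q)⁻¹ * apN n L := by
        apply mul_le_mul_of_nonneg_right _ hAL
        apply mul_le_mul_of_nonneg_left _ (pow_nonneg hq0 _)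
        have hrefl := Finset.sum_range_reflect (fun k => q ^ (M - k)) (M+1)
        calc ∑ k ∈ Finset.range (M+1), q ^ (M - k)
            = ∑ j ∈ Finset.range (M+1), q ^ (M - (M + 1 - 1 - j)) := hrefl.symm
          _ = ∑ j ∈ Finset.range (M+1), q ^ j := by
              apply Finset.sum_congr rfl; intro j hj
              have : j ≤ M := by simpa [Nat.lt_succ_iff] using Finset.mem_range.1 hj
              congr 1; omega
          _ ≤ (1 - q)⁻¹ := geom_aux hq0 hq1 _

lemma eval_apery (n : ℕ) :
    (aperyPoly n).eval 1 = ∑ k ∈ Finset.range (n+1), (apN n k : ℝ) := by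
  simp [aperyPoly, apN, eval_finset_sum]

lemma deriv_apery (n : ℕ) :
    (derivative (aperyPoly n)).eval 1 = ∑ k ∈ Finset.range (n+1), (k:ℝ) * apN n k := by
  unfold aperyPoly
  rw [derivative_sum, eval_finset_sum]
  apply Finset.sum_congr rfl
  intro k _
  rw [derivative_C_mul_X_pow]
  simp [apN, mul_comm]

lemma phi_sq : ((Real.sqrt 5 - 1)/2)^2 + ((Real.sqrt 5 - 1)/2) = 1 := by
  have h5 : Real.sqrt 5 ^ 2 = 5 := Real.sq_sqrt (by norm_num)
  nlinarith [h5]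

lemma phi_gt : (0.6:ℝ) < (Real.sqrt 5 - 1)/2 := by
  have h5 : Real.sqrt 5 ^ 2 = 5 := Real.sq_sqrt (by norm_num)
  nlinarith [Real.sqrt_nonneg 5]

lemma phi_lt : (Real.sqrt 5 - 1)/2 < 0.7 := by
  have h5 : Real.sqrt 5 ^ 2 = 5 := Real.sq_sqrt (by norm_num)
  nlinarith [Real.sqrt_nonneg 5]

set_option maxHeartbeats 1000000 in
theorem apery_mean_limit :
    Filter.Tendsto
      (fun n : ℕ => (derivative (aperyPoly n)).eval 1 / ((n : ℝ) * (aperyPoly n).eval 1))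
      Filter.atTop (nhds ((Real.sqrt 5 - 1) / 2)) := by
  rw [Metric.tendsto_nhds]
  intro ε hε
  set φ : ℝ := (Real.sqrt 5 - 1)/2 with hφdef
  have hφsq : φ^2 + φ = 1 := phi_sq
  have hφ0 : (0.6:ℝ) < φ := phi_gt
  have hφ1 : φ < 0.7 := phi_lt
  set δ : ℝ := min (ε/4) (1/20) with hδdef
  have hδ0 : 0 < δ := lt_min (by linarith) (by norm_num)
  have hδε : δ ≤ ε/4 := min_le_left _ _
  have hδ20 : δ ≤ 1/20 := min_le_right _ _
  set s : ℝ := φ + δ/2 with hsdef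
  set t : ℝ := φ - δ/2 with htdef
  have hs0 : 0 < s := by rw [hsdef]; linarith
  have hs1 : s < 1 := by rw [hsdef]; linarith
  have ht0 : 0 < t := by rw [htdef]; linarith
  have ht1 : t < 1 := by rw [htdef]; linarith
  have hgapR : (1-s)^2*(1+s) < s^3 := by
    rw [hsdef]; nlinarith [hφsq, hδ0, hφ0]
  have hgapL : t^3 < (1-t)^2*(1+t) := by
    rw [htdef]; nlinarith [hφsq, hδ0, hφ0, hδ20]
  have hs3 : (0:ℝ) < s^3 := pow_pos hs0 3
  have ht3 : (0:ℝ) < t^3 := pow_pos ht0 3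
  have hP0 : (0:ℝ) ≤ (1-s)^2*(1+s) := mul_nonneg (sq_nonneg _) (by linarith)
  have hQ0 : (0:ℝ) < (1-t)^2*(1+t) :=
    mul_pos (pow_pos (by linarith) 2) (by linarith)
  set q : ℝ := ((1-s)^2*(1+s) + s^3)/(2*s^3) with hqdef
  set r : ℝ := t^3 / ((1-t)^2*(1+t)) with hrdef
  have hq0 : 0 ≤ q := div_nonneg (by linarith) (by linarith)
  have hq1 : q < 1 := by rw [hqdef, div_lt_one (by linarith)]; linarith
  have hr0 : 0 ≤ r := le_of_lt (div_pos ht3 hQ0)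
  have hr1 : r < 1 := by rw [hrdef, div_lt_one hQ0]; exact hgapL
  obtain ⟨j₀, hj₀⟩ := exists_pow_lt_of_lt_one (mul_pos hδ0 (by linarith : (0:ℝ) < 1 - q)) hq1
  obtain ⟨j₁, hj₁⟩ := exists_pow_lt_of_lt_one (mul_pos hδ0 (by linarith : (0:ℝ) < 1 - r)) hr1
  have hev1 : ∀ᶠ n:ℕ in atTop, 12 ≤ (s^3 - (1-s)^2*(1+s)) * (n:ℝ) :=
    ((tendsto_natCast_atTop_atTop).const_mul_atTop (by linarith)).eventually_ge_atTop 12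
  have hev2 : ∀ᶠ n:ℕ in atTop, (1:ℝ) ≤ δ * (n:ℝ) :=
    ((tendsto_natCast_atTop_atTop).const_mul_atTop hδ0).eventually_ge_atTop 1
  have hev3 : ∀ᶠ n:ℕ in atTop, ((j₀:ℝ) + (j₁:ℝ) + 2) ≤ δ/2 * (n:ℝ) :=
    ((tendsto_natCast_atTop_atTop).const_mul_atTop (by linarith)).eventually_ge_atTop _
  have hev4 : ∀ᶠ n:ℕ in atTop, 1 ≤ n := Filter.eventually_ge_atTop 1
  filter_upwards [hev1, hev2, hev3, hev4] with n h12 hδn hjn hn1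
  have hm1 : (1:ℝ) ≤ (n:ℝ) := by exact_mod_cast hn1
  have hm0 : (0:ℝ) < (n:ℝ) := by linarith
  -- cutoffs
  set K : ℕ := ⌈s * (n:ℝ)⌉₊ with hKdef
  set M : ℕ := ⌈(φ + δ) * (n:ℝ)⌉₊ with hMdef
  set Mm : ℕ := ⌊(φ - δ) * (n:ℝ)⌋₊ with hMmdef
  set L : ℕ := ⌊t * (n:ℝ)⌋₊ with hLdef
  have hKM : K ≤ M := by
    rw [hKdef, hMdef]
    exact Nat.ceil_le_ceil (by rw [hsdef]; have := mul_nonneg (show (0:ℝ) ≤ δ/2 by linarith) (Nat.cast_nonneg (α:=ℝ) n); linarith)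
  have hMn : M ≤ n := by
    rw [hMdef]
    exact Nat.ceil_le.mpr (by
      have := mul_nonneg (show (0:ℝ) ≤ 1-(φ+δ) by linarith) (Nat.cast_nonneg (α:=ℝ) n)
      linarith)
  have hKr1 : s * (n:ℝ) ≤ (K:ℝ) := by rw [hKdef]; exact Nat.le_ceil _
  have hKr2 : (K:ℝ) ≤ s * (n:ℝ) + 1 := by
    rw [hKdef]; exact (Nat.ceil_lt_add_one (mul_nonneg hs0.le (Nat.cast_nonneg n))).le
  have hMr1 : (φ + δ) * (n:ℝ) ≤ (M:ℝ) := by rw [hMdef]; exact Nat.le_ceil _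
  have hMr2 : (M:ℝ) ≤ (φ + δ) * (n:ℝ) + 1 := by
    rw [hMdef]; exact (Nat.ceil_lt_add_one (mul_nonneg (by linarith) (Nat.cast_nonneg n))).le
  have hLr1 : (L:ℝ) ≤ t * (n:ℝ) := by
    rw [hLdef]; exact Nat.floor_le (mul_nonneg ht0.le (Nat.cast_nonneg n))
  have hLr2 : t * (n:ℝ) ≤ (L:ℝ) + 1 := by rw [hLdef]; exact (Nat.lt_floor_add_one _).le
  have hMmr1 : (Mm:ℝ) ≤ (φ - δ) * (n:ℝ) := by
    rw [hMmdef]; exact Nat.floor_le (mul_nonneg (by linarith) (Nat.cast_nonneg n))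
  have hMmr2 : (φ - δ) * (n:ℝ) ≤ (Mm:ℝ) + 1 := by
    rw [hMmdef]; exact (Nat.lt_floor_add_one _).le
  have hts : t*(n:ℝ) - (φ - δ)*(n:ℝ) = δ/2*(n:ℝ) := by rw [htdef]; ring
  have hds : (φ + δ)*(n:ℝ) - s*(n:ℝ) = δ/2*(n:ℝ) := by rw [hsdef]; ring
  have hstepR : ∀ k, K ≤ k → (apN n (k+1):ℝ) ≤ q * apN n k := by
    intro k hk
    have hks : s * (n:ℝ) ≤ (k:ℝ) := le_trans hKr1 (Nat.cast_le.mpr hk)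
    have h := ratio_right hs0 hs1 h12 hgapR hks
    rw [hqdef, div_mul_eq_mul_div, le_div_iff₀ (by linarith : (0:ℝ) < 2*s^3)]
    linarith
  have hstepL : ∀ k, k < L → (apN n k:ℝ) ≤ r * apN n (k+1) := by
    intro k hk
    have hk1 : (k:ℝ) + 1 ≤ t * (n:ℝ) := by
      have h1 : ((k+1:ℕ):ℝ) ≤ (L:ℝ) := Nat.cast_le.mpr hk
      push_cast at h1
      linarith
    have h := ratio_left ht0 ht1 hk1
    rw [hrdef, div_mul_eq_mul_div, le_div_iff₀ hQ0]
    linarith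
  clear_value φ δ s t q r K M Mm L
  have hδn2 : (0:ℝ) ≤ δ/2*(n:ℝ) := mul_nonneg (by linarith) (Nat.cast_nonneg n)
  have hLn : L ≤ n := by
    have h1 := mul_nonneg (show (0:ℝ) ≤ 1-t by linarith) (Nat.cast_nonneg (α:=ℝ) n)
    have : (L:ℝ) ≤ (n:ℝ) := by linarith
    exact_mod_cast this
  have hMmL : Mm ≤ L := by
    have hj0n : (0:ℝ) ≤ (j₀:ℝ) := Nat.cast_nonneg _
    have hj1n : (0:ℝ) ≤ (j₁:ℝ) := Nat.cast_nonneg _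
    have : (Mm:ℝ) ≤ (L:ℝ) := by linarith
    exact_mod_cast this
  have hj0MK : j₀ ≤ M - K := by
    have h1 : (j₀:ℝ) ≤ (M:ℝ) - (K:ℝ) := by
      linarith [Nat.cast_nonneg (α:=ℝ) j₁]
    have h2 : ((M - K : ℕ):ℝ) = (M:ℝ) - (K:ℝ) := Nat.cast_sub hKM
    have : (j₀:ℝ) ≤ ((M - K : ℕ):ℝ) := by rw [h2]; exact h1
    exact_mod_cast this
  have hj1LMm : j₁ ≤ L - Mm := by
    have h1 : (j₁:ℝ) ≤ (L:ℝ) - (Mm:ℝ) := by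
      linarith [Nat.cast_nonneg (α:=ℝ) j₀]
    have h2 : ((L - Mm : ℕ):ℝ) = (L:ℝ) - (Mm:ℝ) := Nat.cast_sub hMmL
    have : (j₁:ℝ) ≤ ((L - Mm : ℕ):ℝ) := by rw [h2]; exact h1
    exact_mod_cast this
  -- sums
  set S0 : ℝ := ∑ k ∈ Finset.range (n+1), (apN n k : ℝ) with hS0def
  set S1 : ℝ := ∑ k ∈ Finset.range (n+1), (k:ℝ) * (apN n k : ℝ) with hS1def
  have hS0pos : 0 < S0 := by
    rw [hS0def]
    apply Finset.sum_pos' (fun k _ => Nat.cast_nonneg _)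
    exact ⟨0, Finset.mem_range.mpr (by omega), by exact_mod_cast apN_pos (Nat.zero_le n)⟩
  have hANonneg : ∀ k ∈ Finset.range (n+1), (0:ℝ) ≤ (apN n k : ℝ) :=
    fun k _ => Nat.cast_nonneg _
  -- tail bound
  have htail : ∑ k ∈ Finset.Ico M (n+1), (apN n k : ℝ) ≤ δ * S0 := by
    have h1 := sum_tail_le hq0 hq1 hKM hstepR
    have hAK : (apN n K : ℝ) ≤ S0 :=
      Finset.single_le_sum hANonneg (Finset.mem_range.mpr (by omega))
    have h2 : q ^ (M-K) ≤ q ^ j₀ := pow_le_pow_of_le_one hq0 hq1.le hj0MK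
    have h1q : (0:ℝ) < 1 - q := by linarith
    have h3 : q ^ j₀ * (1-q)⁻¹ ≤ δ := by
      calc q ^ j₀ * (1-q)⁻¹ ≤ (δ*(1-q)) * (1-q)⁻¹ :=
            mul_le_mul_of_nonneg_right hj₀.le (inv_nonneg.mpr h1q.le)
        _ = δ := by field_simp
    calc ∑ k ∈ Finset.Ico M (n+1), (apN n k : ℝ)
        ≤ q ^ (M-K) * (1-q)⁻¹ * apN n K := h1
      _ ≤ q ^ j₀ * (1-q)⁻¹ * S0 := by
          apply mul_le_mul (mul_le_mul_of_nonneg_right h2 (inv_nonneg.mpr h1q.le)) hAK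
            (Nat.cast_nonneg _) (mul_nonneg (pow_nonneg hq0 _) (inv_nonneg.mpr h1q.le))
      _ ≤ δ * S0 := mul_le_mul_of_nonneg_right h3 hS0pos.le
  -- head bound
  have hhead : ∑ k ∈ Finset.range (Mm+1), (apN n k : ℝ) ≤ δ * S0 := by
    have h1 := sum_head_le hr0 hr1 hMmL hstepL
    have hAL : (apN n L : ℝ) ≤ S0 :=
      Finset.single_le_sum hANonneg (Finset.mem_range.mpr (by omega))
    have h2 : r ^ (L-Mm) ≤ r ^ j₁ := pow_le_pow_of_le_one hr0 hr1.le hj1LMm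
    have h1r : (0:ℝ) < 1 - r := by linarith
    have h3 : r ^ j₁ * (1-r)⁻¹ ≤ δ := by
      calc r ^ j₁ * (1-r)⁻¹ ≤ (δ*(1-r)) * (1-r)⁻¹ :=
            mul_le_mul_of_nonneg_right hj₁.le (inv_nonneg.mpr h1r.le)
        _ = δ := by field_simp
    calc ∑ k ∈ Finset.range (Mm+1), (apN n k : ℝ)
        ≤ r ^ (L-Mm) * (1-r)⁻¹ * apN n L := h1
      _ ≤ r ^ j₁ * (1-r)⁻¹ * S0 := by
          apply mul_le_mul (mul_le_mul_of_nonneg_right h2 (inv_nonneg.mpr h1r.le)) hAL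
            (Nat.cast_nonneg _) (mul_nonneg (pow_nonneg hr0 _) (inv_nonneg.mpr h1r.le))
      _ ≤ δ * S0 := mul_le_mul_of_nonneg_right h3 hS0pos.le
  -- upper bound on S1
  have hsplit := Finset.sum_range_add_sum_Ico (fun k => (k:ℝ) * (apN n k : ℝ))
    (show M ≤ n+1 by omega)
  have hU1 : ∑ k ∈ Finset.range M, (k:ℝ) * (apN n k : ℝ) ≤ (M:ℝ) * S0 := by
    calc ∑ k ∈ Finset.range M, (k:ℝ) * (apN n k : ℝ)
        ≤ ∑ k ∈ Finset.range M, (M:ℝ) * (apN n k : ℝ) := by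
          apply Finset.sum_le_sum
          intro k hk
          exact mul_le_mul_of_nonneg_right
            (Nat.cast_le.mpr (Finset.mem_range.1 hk).le) (Nat.cast_nonneg _)
      _ = (M:ℝ) * ∑ k ∈ Finset.range M, (apN n k : ℝ) := by rw [Finset.mul_sum]
      _ ≤ (M:ℝ) * S0 := by
          apply mul_le_mul_of_nonneg_left _ (Nat.cast_nonneg _)
          apply Finset.sum_le_sum_of_subset_of_nonneg
            (Finset.range_subset_range.mpr (by omega)) (fun k _ _ => Nat.cast_nonneg _)
  have hU2 : ∑ k ∈ Finset.Ico M (n+1), (k:ℝ) * (apN n k : ℝ) ≤ (n:ℝ) * (δ * S0) := by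
    calc ∑ k ∈ Finset.Ico M (n+1), (k:ℝ) * (apN n k : ℝ)
        ≤ ∑ k ∈ Finset.Ico M (n+1), (n:ℝ) * (apN n k : ℝ) := by
          apply Finset.sum_le_sum
          intro k hk
          have : k ≤ n := by have := (Finset.mem_Ico.1 hk).2; omega
          exact mul_le_mul_of_nonneg_right (Nat.cast_le.mpr this) (Nat.cast_nonneg _)
      _ = (n:ℝ) * ∑ k ∈ Finset.Ico M (n+1), (apN n k : ℝ) := by rw [Finset.mul_sum]
      _ ≤ (n:ℝ) * (δ * S0) := mul_le_mul_of_nonneg_left htail (Nat.cast_nonneg _)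
  have hMb : (M:ℝ) ≤ (φ + 2*δ) * (n:ℝ) := by
    have e : (φ + 2*δ)*(n:ℝ) - (φ + δ)*(n:ℝ) = δ*(n:ℝ) := by ring
    linarith
  have hSU2 : S1 ≤ (φ + 3*δ) * ((n:ℝ) * S0) := by
    have hMS0 : (M:ℝ) * S0 ≤ ((φ + 2*δ) * (n:ℝ)) * S0 :=
      mul_le_mul_of_nonneg_right hMb hS0pos.le
    have : S1 = (∑ k ∈ Finset.range M, (k:ℝ) * (apN n k : ℝ))
        + ∑ k ∈ Finset.Ico M (n+1), (k:ℝ) * (apN n k : ℝ) := by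
      rw [hS1def, ← hsplit]
    have e : (φ + 3*δ) * ((n:ℝ) * S0) = ((φ + 2*δ) * (n:ℝ)) * S0 + (n:ℝ)*(δ*S0) := by ring
    linarith [hU1, hU2]
  -- lower bound on S1
  have hsplit2 := Finset.sum_range_add_sum_Ico (fun k => (k:ℝ) * (apN n k : ℝ))
    (show Mm+1 ≤ n+1 by omega)
  have hsplit3 := Finset.sum_range_add_sum_Ico (fun k => (apN n k : ℝ))
    (show Mm+1 ≤ n+1 by omega)
  have hIcoA : S0 - δ * S0 ≤ ∑ k ∈ Finset.Ico (Mm+1) (n+1), (apN n k : ℝ) := by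
    have := hsplit3
    linarith [hhead]
  have hIcoK : ∑ k ∈ Finset.Ico (Mm+1) (n+1), ((Mm:ℝ)+1) * (apN n k : ℝ)
      ≤ ∑ k ∈ Finset.Ico (Mm+1) (n+1), (k:ℝ) * (apN n k : ℝ) := by
    apply Finset.sum_le_sum
    intro k hk
    have h1 : Mm + 1 ≤ k := (Finset.mem_Ico.1 hk).1
    have h2 : ((Mm:ℝ)+1) ≤ (k:ℝ) := by exact_mod_cast h1
    exact mul_le_mul_of_nonneg_right h2 (Nat.cast_nonneg _)
  have hheadK : (0:ℝ) ≤ ∑ k ∈ Finset.range (Mm+1), (k:ℝ) * (apN n k : ℝ) :=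
    Finset.sum_nonneg (fun k _ => mul_nonneg (Nat.cast_nonneg _) (Nat.cast_nonneg _))
  have hL1 : ((Mm:ℝ)+1) * (S0 - δ * S0) ≤ S1 := by
    calc ((Mm:ℝ)+1) * (S0 - δ * S0)
        ≤ ((Mm:ℝ)+1) * ∑ k ∈ Finset.Ico (Mm+1) (n+1), (apN n k : ℝ) :=
          mul_le_mul_of_nonneg_left hIcoA (by positivity)
      _ = ∑ k ∈ Finset.Ico (Mm+1) (n+1), ((Mm:ℝ)+1) * (apN n k : ℝ) := by
          rw [Finset.mul_sum]
      _ ≤ ∑ k ∈ Finset.Ico (Mm+1) (n+1), (k:ℝ) * (apN n k : ℝ) := hIcoK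
      _ ≤ S1 := by rw [hS1def, ← hsplit2]; linarith
  have hSL : (φ - 2*δ) * ((n:ℝ) * S0) ≤ S1 := by
    have p1 : (0:ℝ) ≤ δ*(1-φ+δ) := mul_nonneg hδ0.le (by linarith)
    have p2 : (0:ℝ) ≤ ((n:ℝ)*S0)*(δ*(1-φ+δ)) :=
      mul_nonneg (mul_nonneg hm0.le hS0pos.le) p1
    have e2 : (φ - 2*δ) * ((n:ℝ) * S0) ≤ ((φ - δ) * (n:ℝ)) * ((1 - δ) * S0) := by
      linarith [p2]
    have e3 : ((φ - δ) * (n:ℝ)) * ((1 - δ) * S0) ≤ ((Mm:ℝ)+1) * ((1 - δ) * S0) := by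
      apply mul_le_mul_of_nonneg_right hMmr2
      exact mul_nonneg (by linarith) hS0pos.le
    have e4 : ((Mm:ℝ)+1) * ((1 - δ) * S0) = ((Mm:ℝ)+1) * (S0 - δ * S0) := by ring
    linarith [hL1]
  -- conclude
  have hmS0 : (0:ℝ) < (n:ℝ) * S0 := mul_pos hm0 hS0pos
  have hμU : S1 / ((n:ℝ) * S0) ≤ φ + 3*δ := by
    rw [div_le_iff₀ hmS0]; linarith
  have hμL : φ - 2*δ ≤ S1 / ((n:ℝ) * S0) := by
    rw [le_div_iff₀ hmS0]; linarith
  rw [deriv_apery, eval_apery, ← hS0def, ← hS1def, Real.dist_eq, abs_lt]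
  constructor
  · linarith
  · linarith
end

section
/- For the Apéry polynomial f_n(x) = Σ_{k=0}^n C(n,k)^2 C(n+k,k) x^k, one has lim_{n→∞} f_n''(1)/(n^2 f_n(1)) = (3 − √5)/2. -/
open Polynomial Finset Filter

noncomputable def aa (n k : ℕ) : ℝ := (((n.choose k) ^ 2 * ((n + k).choose k) : ℕ) : ℝ)

noncomputable def S0 (n : ℕ) : ℝ := ∑ k ∈ Finset.range (n + 1), aa n k

noncomputable def S2 (n : ℕ) : ℝ := ∑ k ∈ Finset.range (n + 1), ((k * (k - 1) : ℕ) : ℝ) * aa n k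

lemma aa_nonneg (n k : ℕ) : 0 ≤ aa n k := Nat.cast_nonneg _

lemma aa_pos (n : ℕ) {k : ℕ} (hk : k ≤ n) : 0 < aa n k := by
  have h1 : 0 < n.choose k := Nat.choose_pos hk
  have h2 : 0 < (n + k).choose k := Nat.choose_pos (Nat.le_add_left _ _)
  have : 0 < (n.choose k) ^ 2 * ((n + k).choose k) := by positivity
  unfold aa; exact_mod_cast this

lemma S0_pos (n : ℕ) : 0 < S0 n := by
  apply Finset.sum_pos (fun k hk => aa_pos n (Nat.lt_succ_iff.mp (Finset.mem_range.mp hk)))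
  exact ⟨0, Finset.mem_range.mpr (Nat.succ_pos n)⟩

lemma aa_le_S0 (n : ℕ) {k : ℕ} (hk : k ≤ n) : aa n k ≤ S0 n :=
  Finset.single_le_sum (fun i _ => aa_nonneg n i) (Finset.mem_range.mpr (Nat.lt_succ_of_le hk))

lemma nat_ratio (n k : ℕ) :
    (n.choose (k+1)) ^ 2 * ((n + (k+1)).choose (k+1)) * (k+1)^3
      = (n.choose k) ^ 2 * ((n + k).choose k) * (n - k)^2 * (n + k + 1) := by
  have h1 : n.choose (k+1) * (k+1) = n.choose k * (n - k) := Nat.choose_succ_right_eq n k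
  have h2 : (n + k).succ * (n + k).choose k = (n + k).succ.choose k.succ * k.succ :=
    Nat.add_one_mul_choose_eq (n + k) k
  simp only [Nat.succ_eq_add_one] at h2
  have e : n + (k+1) = (n + k) + 1 := rfl
  rw [e]
  calc (n.choose (k+1)) ^ 2 * (((n + k) + 1).choose (k+1)) * (k+1)^3
      = (n.choose (k+1) * (k+1))^2 * (((n + k) + 1).choose (k+1) * (k+1)) := by ring
    _ = (n.choose k * (n - k))^2 * (((n + k) + 1) * (n + k).choose k) := by rw [h1, ← h2]
    _ = (n.choose k) ^ 2 * ((n + k).choose k) * (n - k)^2 * (n + k + 1) := by ring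

lemma aa_ratio (n : ℕ) {k : ℕ} (hk : k ≤ n) :
    aa n (k+1) * ((k:ℝ)+1)^3 = aa n k * ((n:ℝ) - k)^2 * ((n:ℝ) + k + 1) := by
  have := nat_ratio n k
  have h := congrArg (fun m : ℕ => (m : ℝ)) this
  simp only [Nat.cast_mul, Nat.cast_pow, Nat.cast_add, Nat.cast_one] at h
  rw [Nat.cast_sub hk] at h
  unfold aa
  push_cast
  push_cast at h
  linarith [h]

noncomputable def gg (v : ℝ) : ℝ := (1 - v)^2 * (1 + v) / v^3

lemma gg_pos {v : ℝ} (hv0 : 0 < v) (hv1 : v < 1) : 0 < gg v := by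
  unfold gg
  have : (0:ℝ) < 1 - v := by linarith
  positivity

lemma aa_eq_zero {n k : ℕ} (h : n < k) : aa n k = 0 := by
  unfold aa
  rw [Nat.choose_eq_zero_of_lt h]
  simp

lemma step_hi {v : ℝ} (hv0 : 0 < v) (hv1 : v < 1) {n k : ℕ} (hk : v * n ≤ k) :
    aa n (k+1) ≤ gg v * aa n k := by
  rcases le_or_gt k n with hkn | hkn
  · have key : ((n:ℝ) - k)^2 * ((n:ℝ) + k + 1) ≤ gg v * ((k:ℝ)+1)^3 := by
      have hA : (0:ℝ) ≤ (n:ℝ) - k := by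
        have := (Nat.cast_le (α := ℝ)).mpr hkn; linarith
      have hA2 : v * ((n:ℝ) - k) ≤ (1 - v) * ((k:ℝ)+1) := by nlinarith
      have hB : v * ((n:ℝ) + k + 1) ≤ (1 + v) * ((k:ℝ)+1) := by nlinarith
      have hBnn : (0:ℝ) ≤ v * ((n:ℝ) + k + 1) := by positivity
      have hAnn : (0:ℝ) ≤ v * ((n:ℝ) - k) := by positivity
      have h1 : (v * ((n:ℝ) - k)) * (v * ((n:ℝ) - k)) * (v * ((n:ℝ) + k + 1))
          ≤ ((1-v) * ((k:ℝ)+1)) * ((1-v) * ((k:ℝ)+1)) * ((1+v) * ((k:ℝ)+1)) := by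
        apply mul_le_mul (mul_le_mul hA2 hA2 hAnn (by nlinarith)) hB hBnn
        nlinarith
      rw [gg, div_mul_eq_mul_div, le_div_iff₀ (by positivity)]
      nlinarith [h1]
    have hr := aa_ratio n hkn
    have h3 : (0:ℝ) < ((k:ℝ)+1)^3 := by positivity
    rw [← mul_le_mul_iff_left₀ h3]
    calc aa n (k+1) * ((k:ℝ)+1)^3 = aa n k * (((n:ℝ) - k)^2 * ((n:ℝ) + k + 1)) := by
          rw [hr]; ring
      _ ≤ aa n k * (gg v * ((k:ℝ)+1)^3) := by
          exact mul_le_mul_of_nonneg_left key (aa_nonneg n k)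
      _ = gg v * aa n k * ((k:ℝ)+1)^3 := by ring
  · rw [aa_eq_zero (by omega : n < k + 1)]
    exact mul_nonneg (le_of_lt (gg_pos hv0 hv1)) (aa_nonneg n k)

lemma step_lo {u : ℝ} (hu0 : 0 < u) (hu1 : u < 1) {n k : ℕ} (hk : (k:ℝ) + 1 ≤ u * n) :
    gg u * aa n k ≤ aa n (k+1) := by
  have hkn : k ≤ n := by
    by_contra h
    push_neg at h
    have : (k:ℝ) + 1 ≤ (n:ℝ) := le_trans hk (by nlinarith [Nat.cast_nonneg (α := ℝ) n])
    have := (Nat.cast_le (α := ℝ)).mpr h.le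
    have hn := (Nat.cast_lt (α := ℝ)).mpr h
    linarith
  have key : gg u * ((k:ℝ)+1)^3 ≤ ((n:ℝ) - k)^2 * ((n:ℝ) + k + 1) := by
    have hA2 : (1 - u) * ((k:ℝ)+1) ≤ u * ((n:ℝ) - k) := by nlinarith
    have hB : (1 + u) * ((k:ℝ)+1) ≤ u * ((n:ℝ) + k + 1) := by nlinarith
    have hAnn : (0:ℝ) ≤ (1 - u) * ((k:ℝ)+1) := by
      have : (0:ℝ) ≤ 1 - u := by linarith
      positivity
    have hBnn : (0:ℝ) ≤ (1 + u) * ((k:ℝ)+1) := by positivity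
    have h1 : ((1-u) * ((k:ℝ)+1)) * ((1-u) * ((k:ℝ)+1)) * ((1+u) * ((k:ℝ)+1))
        ≤ (u * ((n:ℝ) - k)) * (u * ((n:ℝ) - k)) * (u * ((n:ℝ) + k + 1)) := by
      apply mul_le_mul (mul_le_mul hA2 hA2 hAnn (le_trans hAnn hA2)) hB hBnn
      nlinarith [le_trans hAnn hA2]
    rw [gg, div_mul_eq_mul_div, div_le_iff₀ (by positivity)]
    nlinarith [h1]
  have hr := aa_ratio n hkn
  have h3 : (0:ℝ) < ((k:ℝ)+1)^3 := by positivity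
  rw [← mul_le_mul_iff_left₀ h3]
  calc gg u * aa n k * ((k:ℝ)+1)^3 = aa n k * (gg u * ((k:ℝ)+1)^3) := by ring
    _ ≤ aa n k * (((n:ℝ) - k)^2 * ((n:ℝ) + k + 1)) :=
        mul_le_mul_of_nonneg_left key (aa_nonneg n k)
    _ = aa n (k+1) * ((k:ℝ)+1)^3 := by rw [hr]; ring

lemma chain_hi {v : ℝ} (hv0 : 0 < v) (hv1 : v < 1) {n K : ℕ} (hK : v * n ≤ K) (j : ℕ) :
    aa n (K + j) ≤ (gg v)^j * aa n K := by
  induction j with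
  | zero => simp
  | succ j ih =>
      have hstep : aa n (K + j + 1) ≤ gg v * aa n (K + j) :=
        step_hi hv0 hv1 (le_trans hK (by exact_mod_cast Nat.cast_le.mpr (Nat.le_add_right K j)))
      calc aa n (K + (j+1)) = aa n (K + j + 1) := by ring_nf
        _ ≤ gg v * aa n (K + j) := hstep
        _ ≤ gg v * ((gg v)^j * aa n K) :=
            mul_le_mul_of_nonneg_left ih (le_of_lt (gg_pos hv0 hv1))
        _ = (gg v)^(j+1) * aa n K := by ring

lemma chain_lo {u : ℝ} (hu0 : 0 < u) (hu1 : u < 1) {n : ℕ} (j : ℕ) : ∀ k : ℕ,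
    (k:ℝ) + j ≤ u * n → aa n k ≤ ((gg u)⁻¹)^j * aa n (k + j) := by
  have hg : 0 < gg u := gg_pos hu0 hu1
  induction j with
  | zero => intro k _; simp
  | succ j ih =>
      intro k h
      have h1 : (k:ℝ) + 1 ≤ u * n := by push_cast at h ⊢; linarith [Nat.cast_nonneg (α := ℝ) j]
      have hstep : aa n k ≤ (gg u)⁻¹ * aa n (k+1) := by
        rw [← mul_le_mul_iff_right₀ hg]
        calc gg u * aa n k ≤ aa n (k+1) := step_lo hu0 hu1 h1
          _ = gg u * ((gg u)⁻¹ * aa n (k+1)) := by field_simp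
      have h2 : ((k:ℝ)+1) + j ≤ u * n := by push_cast at h ⊢; linarith
      calc aa n k ≤ (gg u)⁻¹ * aa n (k+1) := hstep
        _ ≤ (gg u)⁻¹ * (((gg u)⁻¹)^j * aa n ((k+1) + j)) := by
            apply mul_le_mul_of_nonneg_left (ih (k+1) (by push_cast; push_cast at h2; linarith))
            positivity
        _ = ((gg u)⁻¹)^(j+1) * aa n (k + (j+1)) := by
            rw [show k + 1 + j = k + (j+1) by omega]; ring

lemma gg_lt_one {w : ℝ} (hw0 : 0 < w) (h : 1 < w^2 + w) : gg w < 1 := by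
  rw [gg, div_lt_one (by positivity)]
  nlinarith

lemma gg_gt_one {w : ℝ} (hw0 : 0 < w) (h : w^2 + w < 1) : 1 < gg w := by
  rw [gg, lt_div_iff₀ (by positivity)]
  nlinarith

lemma aux_tendsto {σ : ℝ} (h0 : 0 ≤ σ) (h1 : σ < 1) (c : ℝ) :
    Tendsto (fun n : ℕ => c * (((n:ℝ) + 1) * σ^n)) atTop (nhds 0) := by
  have hs : Summable (fun n : ℕ => (n:ℝ)^1 * σ^n) :=
    summable_pow_mul_geometric_of_norm_lt_one 1 (by rw [Real.norm_eq_abs, abs_of_nonneg h0]; exact h1)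
  have h2 : Tendsto (fun n : ℕ => (n:ℝ)^1 * σ^n) atTop (nhds 0) := hs.tendsto_atTop_zero
  have h3 : Tendsto (fun n : ℕ => σ^n) atTop (nhds 0) :=
    tendsto_pow_atTop_nhds_zero_of_lt_one h0 h1
  have h4 : Tendsto (fun n : ℕ => ((n:ℝ) + 1) * σ^n) atTop (nhds 0) := by
    have := h2.add h3
    simp only [add_zero] at this
    convert this using 2 with n
    ring
  simpa using h4.const_mul c

lemma rpow_exp_bound {ρ : ℝ} (hρ0 : 0 < ρ) (hρ1 : ρ < 1) {j : ℕ} {e : ℝ}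
    (hj : e - 1 ≤ (j:ℝ)) : ρ^j ≤ ρ⁻¹ * (ρ ^ e) := by
  have h1 : (ρ:ℝ)^(j:ℝ) ≤ ρ^(e - 1) :=
    Real.rpow_le_rpow_of_exponent_ge hρ0 hρ1.le hj
  rw [Real.rpow_natCast] at h1
  rw [Real.rpow_sub hρ0] at h1
  calc ρ^j ≤ ρ^e / ρ^(1:ℝ) := h1
    _ = ρ⁻¹ * ρ^e := by rw [Real.rpow_one]; ring

lemma tail_hi {w v : ℝ} (hw0 : 0 < w) (hwv : w < v) (hv1 : v < 1) (hgg : 1 < w^2 + w)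
    {δ : ℝ} (hδ : 0 < δ) :
    ∀ᶠ n : ℕ in atTop,
      ∑ k ∈ (Finset.range (n+1)).filter (fun k : ℕ => v * n ≤ (k:ℝ)), aa n k ≤ δ * S0 n := by
  set ρ := gg w with hρdef
  have hw1 : w < 1 := lt_trans hwv hv1
  have hρ0 : 0 < ρ := gg_pos hw0 hw1
  have hρ1 : ρ < 1 := gg_lt_one hw0 hgg
  set σ := ρ ^ (v - w) with hσdef
  have hσ0 : 0 ≤ σ := Real.rpow_nonneg hρ0.le _
  have hσ1 : σ < 1 := Real.rpow_lt_one hρ0.le hρ1 (by linarith)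
  have E1 : ∀ᶠ n : ℕ in atTop, (1:ℝ) ≤ (v - w) * n := by
    have : Tendsto (fun n : ℕ => (v - w) * (n:ℝ)) atTop atTop :=
      (tendsto_natCast_atTop_atTop).const_mul_atTop (by linarith)
    exact this.eventually_ge_atTop 1
  have E2 : ∀ᶠ n : ℕ in atTop, w * n + 1 ≤ (n:ℝ) := by
    have : Tendsto (fun n : ℕ => (1 - w) * (n:ℝ)) atTop atTop :=
      (tendsto_natCast_atTop_atTop).const_mul_atTop (by linarith)
    filter_upwards [this.eventually_ge_atTop 1] with n hn
    nlinarith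
  have E3 : ∀ᶠ n : ℕ in atTop, ρ⁻¹ * (((n:ℝ) + 1) * σ^n) < δ :=
    (aux_tendsto hσ0 hσ1 ρ⁻¹).eventually_lt_const hδ
  filter_upwards [E1, E2, E3] with n hE1 hE2 hE3
  set K := ⌈w * (n:ℝ)⌉₊ with hKdef
  have hwn : (0:ℝ) ≤ w * n := by positivity
  have hKw : w * n ≤ (K:ℝ) := Nat.le_ceil _
  have hK1 : (K:ℝ) ≤ w * n + 1 := (Nat.ceil_lt_add_one hwn).le
  have hKn : K ≤ n := by exact_mod_cast Nat.cast_le.mpr (by exact_mod_cast le_trans hK1 hE2)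
  have hterm : ∀ k ∈ (Finset.range (n+1)).filter (fun k : ℕ => v * n ≤ (k:ℝ)),
      aa n k ≤ (ρ⁻¹ * (σ^n * S0 n)) := by
    intro k hk
    rw [Finset.mem_filter, Finset.mem_range] at hk
    obtain ⟨hkr, hvk⟩ := hk
    have hKk : K ≤ k := by
      have : (K:ℝ) ≤ (k:ℝ) := by linarith
      exact_mod_cast this
    obtain ⟨j, rfl⟩ : ∃ j, k = K + j := ⟨k - K, by omega⟩
    have h1 : aa n (K + j) ≤ ρ^j * aa n K := chain_hi hw0 hw1 hKw j
    have h2 : aa n K ≤ S0 n := aa_le_S0 n hKn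
    have hje : (v - w) * n - 1 ≤ (j:ℝ) := by
      have : (K:ℝ) + j = ((K + j : ℕ) : ℝ) := by push_cast; ring
      have hkj : v * n ≤ (K:ℝ) + j := by rw [this]; exact hvk
      linarith
    have h3 : ρ^j ≤ ρ⁻¹ * σ^n := by
      have := rpow_exp_bound hρ0 hρ1 (e := (v - w) * n) hje
      rwa [show ρ ^ ((v - w) * (n:ℝ)) = σ^n by
        rw [hσdef, ← Real.rpow_natCast (ρ ^ (v-w)) n, ← Real.rpow_mul hρ0.le]] at this
    calc aa n (K + j) ≤ ρ^j * aa n K := h1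
      _ ≤ ρ^j * S0 n := mul_le_mul_of_nonneg_left h2 (by positivity)
      _ ≤ (ρ⁻¹ * σ^n) * S0 n := mul_le_mul_of_nonneg_right h3 (S0_pos n).le
      _ = ρ⁻¹ * (σ^n * S0 n) := by ring
  calc ∑ k ∈ (Finset.range (n+1)).filter (fun k : ℕ => v * n ≤ (k:ℝ)), aa n k
      ≤ ((Finset.range (n+1)).filter (fun k : ℕ => v * n ≤ (k:ℝ))).card • (ρ⁻¹ * (σ^n * S0 n)) :=
        Finset.sum_le_card_nsmul _ _ _ hterm
    _ ≤ (n+1) * (ρ⁻¹ * (σ^n * S0 n)) := by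
        rw [nsmul_eq_mul]
        apply mul_le_mul_of_nonneg_right _
          (mul_nonneg (inv_nonneg.mpr hρ0.le) (mul_nonneg (pow_nonneg hσ0 n) (S0_pos n).le))
        have := Finset.card_filter_le (Finset.range (n+1)) (fun k : ℕ => v * n ≤ (k:ℝ))
        rw [Finset.card_range] at this
        exact_mod_cast this
    _ = (ρ⁻¹ * (((n:ℝ) + 1) * σ^n)) * S0 n := by push_cast; ring
    _ ≤ δ * S0 n := mul_le_mul_of_nonneg_right hE3.le (S0_pos n).le

lemma tail_lo {u w : ℝ} (hu0 : 0 < u) (huw : u < w) (hw1 : w < 1) (hgg : w^2 + w < 1)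
    {δ : ℝ} (hδ : 0 < δ) :
    ∀ᶠ n : ℕ in atTop,
      ∑ k ∈ (Finset.range (n+1)).filter (fun k : ℕ => (k:ℝ) ≤ u * n), aa n k ≤ δ * S0 n := by
  have hw0 : 0 < w := lt_trans hu0 huw
  have hg1 : 1 < gg w := gg_gt_one hw0 hgg
  have hg0 : 0 < gg w := lt_trans one_pos hg1
  set τ := (gg w)⁻¹ with hτdef
  have hτ0 : 0 < τ := inv_pos.mpr hg0
  have hτ1 : τ < 1 := by rw [hτdef, inv_lt_one_iff₀]; right; exact hg1
  set σ := τ ^ (w - u) with hσdef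
  have hσ0 : 0 ≤ σ := Real.rpow_nonneg hτ0.le _
  have hσ1 : σ < 1 := Real.rpow_lt_one hτ0.le hτ1 (by linarith)
  have E1 : ∀ᶠ n : ℕ in atTop, (1:ℝ) ≤ (w - u) * n := by
    have : Tendsto (fun n : ℕ => (w - u) * (n:ℝ)) atTop atTop :=
      (tendsto_natCast_atTop_atTop).const_mul_atTop (by linarith)
    exact this.eventually_ge_atTop 1
  have E3 : ∀ᶠ n : ℕ in atTop, τ⁻¹ * (((n:ℝ) + 1) * σ^n) < δ :=
    (aux_tendsto hσ0 hσ1 τ⁻¹).eventually_lt_const hδ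
  filter_upwards [E1, E3] with n hE1 hE3
  set K := ⌊w * (n:ℝ)⌋₊ with hKdef
  have hwn : (0:ℝ) ≤ w * n := by positivity
  have hKw : (K:ℝ) ≤ w * n := Nat.floor_le hwn
  have hK1 : w * n - 1 < (K:ℝ) := by
    have := Nat.lt_floor_add_one (w * (n:ℝ)); linarith
  have hKn : K ≤ n := by
    have : (K:ℝ) ≤ (n:ℝ) := le_trans hKw (by nlinarith [Nat.cast_nonneg (α := ℝ) n])
    exact_mod_cast this
  have hterm : ∀ k ∈ (Finset.range (n+1)).filter (fun k : ℕ => (k:ℝ) ≤ u * n),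
      aa n k ≤ (τ⁻¹ * (σ^n * S0 n)) := by
    intro k hk
    rw [Finset.mem_filter, Finset.mem_range] at hk
    obtain ⟨hkr, huk⟩ := hk
    have hKk : k ≤ K := by
      have : (k:ℝ) ≤ (K:ℝ) := by linarith
      exact_mod_cast this
    set j := K - k with hjdef
    have hkj : k + j = K := by omega
    have hcond : (k:ℝ) + j ≤ w * n := by
      have : ((k + j : ℕ):ℝ) = (K:ℝ) := by rw [hkj]
      push_cast at this
      linarith
    have h1 : aa n k ≤ τ^j * aa n K := by
      have := chain_lo hw0 hw1 j k hcond
      rwa [hkj] at this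
    have h2 : aa n K ≤ S0 n := aa_le_S0 n hKn
    have hje : (w - u) * n - 1 ≤ (j:ℝ) := by
      have : (j:ℝ) = (K:ℝ) - (k:ℝ) := by
        rw [hjdef]; push_cast [Nat.cast_sub hKk]; ring
      rw [this]; linarith
    have h3 : τ^j ≤ τ⁻¹ * σ^n := by
      have := rpow_exp_bound hτ0 hτ1 (e := (w - u) * n) hje
      rwa [show τ ^ ((w - u) * (n:ℝ)) = σ^n by
        rw [hσdef, ← Real.rpow_natCast (τ ^ (w-u)) n, ← Real.rpow_mul hτ0.le]] at this
    calc aa n k ≤ τ^j * aa n K := h1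
      _ ≤ τ^j * S0 n := mul_le_mul_of_nonneg_left h2 (by positivity)
      _ ≤ (τ⁻¹ * σ^n) * S0 n := mul_le_mul_of_nonneg_right h3 (S0_pos n).le
      _ = τ⁻¹ * (σ^n * S0 n) := by ring
  calc ∑ k ∈ (Finset.range (n+1)).filter (fun k : ℕ => (k:ℝ) ≤ u * n), aa n k
      ≤ ((Finset.range (n+1)).filter (fun k : ℕ => (k:ℝ) ≤ u * n)).card • (τ⁻¹ * (σ^n * S0 n)) :=
        Finset.sum_le_card_nsmul _ _ _ hterm
    _ ≤ (n+1) * (τ⁻¹ * (σ^n * S0 n)) := by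
        rw [nsmul_eq_mul]
        apply mul_le_mul_of_nonneg_right _
          (mul_nonneg (inv_nonneg.mpr hτ0.le) (mul_nonneg (pow_nonneg hσ0 n) (S0_pos n).le))
        have := Finset.card_filter_le (Finset.range (n+1)) (fun k : ℕ => (k:ℝ) ≤ u * n)
        rw [Finset.card_range] at this
        exact_mod_cast this
    _ = (τ⁻¹ * (((n:ℝ) + 1) * σ^n)) * S0 n := by push_cast; ring
    _ ≤ δ * S0 n := mul_le_mul_of_nonneg_right hE3.le (S0_pos n).le

lemma c_le_sq (n k : ℕ) (hk : k ≤ n) : ((k * (k - 1) : ℕ) : ℝ) ≤ (n:ℝ)^2 := by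
  have h : k * (k - 1) ≤ n^2 := by
    calc k * (k-1) ≤ n * n := Nat.mul_le_mul hk (le_trans (Nat.sub_le _ _) hk)
      _ = n^2 := (sq n).symm
  exact_mod_cast h

lemma c_le_k_sq (k : ℕ) : ((k * (k - 1) : ℕ) : ℝ) ≤ (k:ℝ)^2 := by
  have h : k * (k - 1) ≤ k^2 := by
    calc k * (k-1) ≤ k * k := Nat.mul_le_mul_left k (Nat.sub_le _ _)
      _ = k^2 := (sq k).symm
  exact_mod_cast h

lemma c_ge (k : ℕ) : (k:ℝ)^2 - (k:ℝ) ≤ ((k * (k - 1) : ℕ) : ℝ) := by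
  cases k with
  | zero => simp
  | succ m =>
      rw [Nat.add_sub_cancel]
      push_cast
      nlinarith [sq_nonneg ((m:ℝ))]

lemma R_upper {w v b : ℝ} (hw0 : 0 < w) (hwv : w < v) (hv1 : v < 1) (hgg : 1 < w^2 + w)
    (hb : v^2 < b) :
    ∀ᶠ n : ℕ in atTop, S2 n / ((n:ℝ)^2 * S0 n) < b := by
  have hv0 : 0 < v := lt_trans hw0 hwv
  have hδ : (0:ℝ) < (b - v^2)/2 := by linarith
  filter_upwards [tail_hi hw0 hwv hv1 hgg hδ, Filter.eventually_ge_atTop 1] with n hT hn1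
  have hn0 : (0:ℝ) < (n:ℝ) := by exact_mod_cast hn1
  have hden : (0:ℝ) < (n:ℝ)^2 * S0 n := mul_pos (by positivity) (S0_pos n)
  set P : ℕ → Prop := fun k : ℕ => v * n ≤ (k:ℝ) with hP
  have hsplit := Finset.sum_filter_add_sum_filter_not (Finset.range (n+1)) P
    (fun k => ((k * (k - 1) : ℕ) : ℝ) * aa n k)
  have hPart1 : ∑ k ∈ (Finset.range (n+1)).filter P, ((k * (k - 1) : ℕ) : ℝ) * aa n k
      ≤ (n:ℝ)^2 * ((b - v^2)/2 * S0 n) := by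
    calc ∑ k ∈ (Finset.range (n+1)).filter P, ((k * (k - 1) : ℕ) : ℝ) * aa n k
        ≤ ∑ k ∈ (Finset.range (n+1)).filter P, (n:ℝ)^2 * aa n k := by
          apply Finset.sum_le_sum
          intro k hk
          rw [Finset.mem_filter, Finset.mem_range] at hk
          exact mul_le_mul_of_nonneg_right (c_le_sq n k (by omega)) (aa_nonneg n k)
      _ = (n:ℝ)^2 * ∑ k ∈ (Finset.range (n+1)).filter P, aa n k := by
          rw [Finset.mul_sum]
      _ ≤ (n:ℝ)^2 * ((b - v^2)/2 * S0 n) := by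
          apply mul_le_mul_of_nonneg_left hT (by positivity)
  have hPart2 : ∑ k ∈ (Finset.range (n+1)).filter (fun k => ¬ P k),
      ((k * (k - 1) : ℕ) : ℝ) * aa n k ≤ v^2 * (n:ℝ)^2 * S0 n := by
    calc ∑ k ∈ (Finset.range (n+1)).filter (fun k => ¬ P k), ((k * (k - 1) : ℕ) : ℝ) * aa n k
        ≤ ∑ k ∈ (Finset.range (n+1)).filter (fun k => ¬ P k), v^2 * (n:ℝ)^2 * aa n k := by
          apply Finset.sum_le_sum
          intro k hk
          rw [Finset.mem_filter] at hk
          have hkv : (k:ℝ) < v * n := not_le.mp hk.2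
          apply mul_le_mul_of_nonneg_right _ (aa_nonneg n k)
          calc ((k * (k - 1) : ℕ) : ℝ) ≤ (k:ℝ)^2 := c_le_k_sq k
            _ ≤ (v * n)^2 := by nlinarith [Nat.cast_nonneg (α := ℝ) k]
            _ = v^2 * (n:ℝ)^2 := by ring
      _ = v^2 * (n:ℝ)^2 * ∑ k ∈ (Finset.range (n+1)).filter (fun k => ¬ P k), aa n k := by
          rw [Finset.mul_sum]
      _ ≤ v^2 * (n:ℝ)^2 * S0 n := by
          apply mul_le_mul_of_nonneg_left _ (by positivity)
          exact Finset.sum_le_sum_of_subset_of_nonneg (Finset.filter_subset _ _)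
            (fun i _ _ => aa_nonneg n i)
  have hS2 : S2 n ≤ (v^2 + (b - v^2)/2) * ((n:ℝ)^2 * S0 n) := by
    rw [S2, ← hsplit]
    nlinarith [hPart1, hPart2]
  calc S2 n / ((n:ℝ)^2 * S0 n) ≤ (v^2 + (b - v^2)/2) := by
        rw [div_le_iff₀ hden]; linarith [hS2]
    _ < b := by linarith

lemma S2_nonneg (n : ℕ) : 0 ≤ S2 n :=
  Finset.sum_nonneg fun k _ => mul_nonneg (Nat.cast_nonneg _) (aa_nonneg n k)

lemma R_lower {u w b : ℝ} (hu0 : 0 < u) (huw : u < w) (hw1 : w < 1) (hgg : w^2 + w < 1)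
    (hb : b < u^2) :
    ∀ᶠ n : ℕ in atTop, b < S2 n / ((n:ℝ)^2 * S0 n) := by
  set b' := max b 0 with hb'
  have hb'0 : 0 ≤ b' := le_max_right _ _
  have hb'u : b' < u^2 := by
    rw [hb']; exact max_lt hb (by positivity)
  set δ := (u^2 - b')/(2 * u^2) with hδdef
  have hδ0 : 0 < δ := by
    rw [hδdef]; exact div_pos (by linarith) (by positivity)
  have hδ1 : δ ≤ 1 := by
    rw [hδdef, div_le_one (by positivity)]; nlinarith
  have hlim : Tendsto (fun n : ℕ => (u^2 - 1/(n:ℝ)) * (1 - δ)) atTop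
      (nhds ((u^2 - 0) * (1 - δ))) := by
    exact (Tendsto.const_sub _ tendsto_one_div_atTop_nhds_zero_nat).mul_const _
  have hgoal : b < (u^2 - 0) * (1 - δ) := by
    have : u^2 * (1 - δ) = (u^2 + b')/2 := by
      rw [hδdef]; field_simp; ring
    rw [sub_zero, this]
    have : b ≤ b' := le_max_left _ _
    linarith
  filter_upwards [tail_lo hu0 huw hw1 hgg hδ0, Filter.eventually_ge_atTop 1,
      hlim.eventually_const_lt hgoal] with n hT hn1 hlimn
  have hn0 : (0:ℝ) < (n:ℝ) := by exact_mod_cast hn1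
  have hS0 := S0_pos n
  have hden : (0:ℝ) < (n:ℝ)^2 * S0 n := mul_pos (by positivity) (S0_pos n)
  set Q : ℕ → Prop := fun k : ℕ => (k:ℝ) ≤ u * n with hQ
  have hsplit := Finset.sum_filter_add_sum_filter_not (Finset.range (n+1)) Q
    (fun k => ((k * (k - 1) : ℕ) : ℝ) * aa n k)
  have hmass : (1 - δ) * S0 n ≤ ∑ k ∈ (Finset.range (n+1)).filter (fun k => ¬ Q k), aa n k := by
    have hsplit0 := Finset.sum_filter_add_sum_filter_not (Finset.range (n+1)) Q (fun k => aa n k)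
    have hT' : ∑ k ∈ (Finset.range (n+1)).filter Q, aa n k ≤ δ * S0 n := hT
    have hS0eq : S0 n = ∑ x ∈ Finset.range (n+1), aa n x := rfl
    linarith [hsplit0, hT']
  have hcoef : ∀ k ∈ (Finset.range (n+1)).filter (fun k => ¬ Q k),
      (u^2 * (n:ℝ)^2 - (n:ℝ)) * aa n k ≤ ((k * (k - 1) : ℕ) : ℝ) * aa n k := by
    intro k hk
    rw [Finset.mem_filter, Finset.mem_range] at hk
    have hku : u * n ≤ (k:ℝ) := (not_le.mp hk.2).le
    have hkn : (k:ℝ) ≤ (n:ℝ) := by exact_mod_cast Nat.lt_succ_iff.mp hk.1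
    apply mul_le_mul_of_nonneg_right _ (aa_nonneg n k)
    calc u^2 * (n:ℝ)^2 - (n:ℝ) = (u * n)^2 - (n:ℝ) := by ring
      _ ≤ (k:ℝ)^2 - (k:ℝ) := by nlinarith [mul_nonneg hu0.le hn0.le]
      _ ≤ ((k * (k - 1) : ℕ) : ℝ) := c_ge k
  have hS2 : (u^2 * (n:ℝ)^2 - (n:ℝ)) * ((1 - δ) * S0 n) ≤ S2 n := by
    rcases le_or_gt 0 (u^2 * (n:ℝ)^2 - (n:ℝ)) with hc | hc
    · calc (u^2 * (n:ℝ)^2 - (n:ℝ)) * ((1 - δ) * S0 n)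
          ≤ (u^2 * (n:ℝ)^2 - (n:ℝ)) * ∑ k ∈ (Finset.range (n+1)).filter (fun k => ¬ Q k), aa n k :=
            mul_le_mul_of_nonneg_left hmass hc
        _ = ∑ k ∈ (Finset.range (n+1)).filter (fun k => ¬ Q k),
              (u^2 * (n:ℝ)^2 - (n:ℝ)) * aa n k := Finset.mul_sum _ _ _
        _ ≤ ∑ k ∈ (Finset.range (n+1)).filter (fun k => ¬ Q k),
              ((k * (k - 1) : ℕ) : ℝ) * aa n k := Finset.sum_le_sum hcoef
        _ ≤ S2 n := by
            rw [S2, ← hsplit]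
            have : 0 ≤ ∑ k ∈ (Finset.range (n+1)).filter Q,
                ((k * (k - 1) : ℕ) : ℝ) * aa n k :=
              Finset.sum_nonneg fun k _ => mul_nonneg (Nat.cast_nonneg _) (aa_nonneg n k)
            linarith
    · have h1 : (0:ℝ) ≤ (1 - δ) * S0 n := mul_nonneg (by linarith) hS0.le
      have h2 : (u^2 * (n:ℝ)^2 - (n:ℝ)) * ((1 - δ) * S0 n) ≤ 0 :=
        mul_nonpos_iff.mpr (Or.inr ⟨hc.le, h1⟩)
      linarith [S2_nonneg n]
  have hfinal : (u^2 - 1/(n:ℝ)) * (1 - δ) ≤ S2 n / ((n:ℝ)^2 * S0 n) := by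
    rw [le_div_iff₀ hden]
    calc (u^2 - 1/(n:ℝ)) * (1 - δ) * ((n:ℝ)^2 * S0 n)
        = (u^2 * (n:ℝ)^2 - (n:ℝ)^2/(n:ℝ)) * ((1 - δ) * S0 n) := by ring
      _ = (u^2 * (n:ℝ)^2 - (n:ℝ)) * ((1 - δ) * S0 n) := by
          have hnn : (n:ℝ)^2/(n:ℝ) = (n:ℝ) := by
            rw [sq]; exact mul_div_cancel_right₀ _ hn0.ne'
          rw [hnn]
      _ ≤ S2 n := hS2
  linarith [hlimn, hfinal]

lemma eval_apery_s9 (n : ℕ) : (aperyPoly n).eval 1 = S0 n := by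
  rw [aperyPoly, eval_finset_sum]
  apply Finset.sum_congr rfl
  intro k _
  simp [aa]

lemma term_second (c : ℝ) (k : ℕ) :
    (derivative (derivative (C c * X ^ k))).eval (1:ℝ) = c * ((k:ℝ) * ((k - 1 : ℕ):ℝ)) := by
  rw [derivative_C_mul, derivative_X_pow, derivative_C_mul, derivative_C_mul,
    derivative_X_pow]
  simp [mul_assoc]

lemma eval_second (n : ℕ) : (derivative (derivative (aperyPoly n))).eval 1 = S2 n := by
  rw [aperyPoly, map_sum, map_sum, eval_finset_sum, S2]
  apply Finset.sum_congr rfl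
  intro k _
  rw [term_second]
  unfold aa
  push_cast
  ring

lemma ratio_eq (n : ℕ) :
    (derivative (derivative (aperyPoly n))).eval 1 / ((n : ℝ) ^ 2 * (aperyPoly n).eval 1)
      = S2 n / ((n:ℝ)^2 * S0 n) := by
  rw [eval_second, eval_apery_s9]

theorem apery_second_moment_limit :
    Filter.Tendsto
      (fun n : ℕ =>
        (derivative (derivative (aperyPoly n))).eval 1 / ((n : ℝ) ^ 2 * (aperyPoly n).eval 1))
      Filter.atTop (nhds ((3 - Real.sqrt 5) / 2)) := by
  have hfun : (fun n : ℕ =>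
      (derivative (derivative (aperyPoly n))).eval 1 / ((n : ℝ) ^ 2 * (aperyPoly n).eval 1))
      = fun n : ℕ => S2 n / ((n:ℝ)^2 * S0 n) := funext ratio_eq
  rw [hfun]
  have hs : (Real.sqrt 5)^2 = 5 := Real.sq_sqrt (by norm_num)
  have hsnn := Real.sqrt_nonneg 5
  set L : ℝ := (3 - Real.sqrt 5)/2 with hL
  set t : ℝ := (Real.sqrt 5 - 1)/2 with ht
  have h2s : 2 < Real.sqrt 5 := by nlinarith
  have h3s : Real.sqrt 5 < 3 := by nlinarith
  have ht0 : 0 < t := by rw [ht]; nlinarith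
  have ht1 : t < 1 := by rw [ht]; nlinarith
  have htsq : t^2 = L := by rw [ht, hL]; nlinarith
  have htsum : t^2 + t = 1 := by rw [ht]; nlinarith
  have hL0 : 0 < L := by rw [hL]; nlinarith
  have hL1 : L < 1 := by rw [hL]; nlinarith
  rw [tendsto_order]
  constructor
  · -- lower bound
    intro b hb
    set u : ℝ := Real.sqrt ((max b 0 + L)/2) with hu
    have hmax0 : 0 ≤ max b 0 := le_max_right _ _
    have hmaxL : max b 0 < L := max_lt hb hL0
    have harg : 0 < (max b 0 + L)/2 := by linarith
    have hu0 : 0 < u := Real.sqrt_pos.mpr harg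
    have husq : u^2 = (max b 0 + L)/2 := Real.sq_sqrt harg.le
    have hbu : b < u^2 := by
      rw [husq]; have : b ≤ max b 0 := le_max_left _ _; linarith
    have huL : u^2 < L := by rw [husq]; linarith
    have hut : u < t := by
      by_contra h
      push_neg at h
      have := pow_le_pow_left₀ ht0.le h 2
      rw [htsq] at this
      linarith
    set w : ℝ := (u + t)/2 with hw
    have huw : u < w := by rw [hw]; linarith
    have hwt : w < t := by rw [hw]; linarith
    have hw0 : 0 < w := lt_trans hu0 huw
    have hw1 : w < 1 := lt_trans hwt ht1
    have hgg : w^2 + w < 1 := by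
      have : w^2 < t^2 := by
        have := pow_lt_pow_left₀ hwt hw0.le (by norm_num : 2 ≠ 0)
        exact this
      linarith
    exact R_lower hu0 huw hw1 hgg hbu
  · -- upper bound
    intro b hb
    set v : ℝ := Real.sqrt ((L + min b 1)/2) with hv
    have hminL : L < min b 1 := lt_min hb hL1
    have harg : 0 < (L + min b 1)/2 := by linarith
    have hvsq : v^2 = (L + min b 1)/2 := Real.sq_sqrt harg.le
    have hv0 : 0 < v := Real.sqrt_pos.mpr harg
    have hvb : v^2 < b := by
      rw [hvsq]; have : min b 1 ≤ b := min_le_left _ _; linarith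
    have hv2lt1 : v^2 < 1 := by
      rw [hvsq]; have : min b 1 ≤ 1 := min_le_right _ _; linarith
    have hv1 : v < 1 := by
      by_contra h
      push_neg at h
      nlinarith
    have htv : t < v := by
      by_contra h
      push_neg at h
      have := pow_le_pow_left₀ hv0.le h 2
      rw [htsq, hvsq] at this
      linarith
    set w : ℝ := (t + v)/2 with hw
    have htw : t < w := by rw [hw]; linarith
    have hwv : w < v := by rw [hw]; linarith
    have hw0 : 0 < w := lt_trans ht0 htw
    have hgg : 1 < w^2 + w := by
      have : t^2 < w^2 := pow_lt_pow_left₀ htw ht0.le (by norm_num : 2 ≠ 0)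
      linarith
    exact R_upper hw0 hwv hv1 hgg hvb
end

section
/- For the Franel polynomial g_n(x) = Σ_{k=0}^n C(n,k)^3 x^k, one has lim_{n→∞} g_n''(1)/(n^2 g_n(1)) = 1/4. -/
open Finset

lemma cb_lower : ∀ m : ℕ, 1 ≤ m → 16 ^ m ≤ 4 * m * (Nat.centralBinom m) ^ 2 := by
  intro m hm
  induction m with
  | zero => omega
  | succ m ih =>
    rcases Nat.eq_or_lt_of_le hm with h | h
    · obtain rfl : m = 0 := by omega
      decide
    · have hm' : 1 ≤ m := by omega
      have IH := ih hm'
      have hr := Nat.succ_mul_centralBinom_succ m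
      have key : (m+1) * 16 ^ (m+1) ≤ (m+1) * (4 * (m+1) * (Nat.centralBinom (m+1)) ^ 2) := by
        have h2 : (m+1) * (4 * (m+1) * (Nat.centralBinom (m+1)) ^ 2)
            = 4 * ((m+1) * Nat.centralBinom (m+1)) ^ 2 := by ring
        rw [h2, hr]
        have : (m+1) * 16 ^ (m+1) = 16 * ((m+1) * 16 ^ m) := by ring
        rw [this]
        calc 16 * ((m+1) * 16 ^ m) ≤ 16 * ((m+1) * (4 * m * (Nat.centralBinom m)^2)) :=
              Nat.mul_le_mul_left _ (Nat.mul_le_mul_left _ IH)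
          _ ≤ 4 * (2 * (2*m+1) * Nat.centralBinom m) ^ 2 := by nlinarith [sq_nonneg (Nat.centralBinom m)]
      exact Nat.le_of_mul_le_mul_left key (by omega)

-- central binomial upper bound: (3m+1) cb(m)^2 ≤ 16^m
lemma cb_upper : ∀ m : ℕ, (3 * m + 1) * (Nat.centralBinom m) ^ 2 ≤ 16 ^ m := by
  intro m
  induction m with
  | zero => simp [Nat.centralBinom]
  | succ m ih =>
    have hr := Nat.succ_mul_centralBinom_succ m
    have key : (m+1)^2 * ((3*(m+1)+1) * (Nat.centralBinom (m+1)) ^ 2)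
        ≤ (m+1)^2 * 16 ^ (m+1) := by
      have h2 : (m+1)^2 * ((3*(m+1)+1) * (Nat.centralBinom (m+1)) ^ 2)
          = (3*m+4) * ((m+1) * Nat.centralBinom (m+1)) ^ 2 := by ring
      rw [h2, hr]
      calc (3*m+4) * (2 * (2*m+1) * Nat.centralBinom m) ^ 2
          ≤ 16 * (m+1)^2 * ((3*m+1) * (Nat.centralBinom m)^2) := by nlinarith [sq_nonneg (Nat.centralBinom m)]
        _ ≤ 16 * (m+1)^2 * 16 ^ m := Nat.mul_le_mul_left _ ih
        _ = (m+1)^2 * 16 ^ (m+1) := by ring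
    exact Nat.le_of_mul_le_mul_left key (by positivity)

lemma sum_choose_sq (n : ℕ) :
    ∑ k ∈ range (n + 1), (n.choose k) ^ 2 = Nat.centralBinom n := by
  rw [Nat.centralBinom, two_mul, Nat.add_choose_eq,
    Finset.Nat.sum_antidiagonal_eq_sum_range_succ_mk]
  refine Finset.sum_congr rfl fun k hk => ?_
  have hk' : k ≤ n := by simpa [Nat.lt_succ_iff] using hk
  rw [Nat.choose_symm hk', sq]

lemma middle_sq_le (n : ℕ) : n * (n.choose (n / 2)) ^ 2 ≤ 4 ^ n := by
  rcases Nat.even_or_odd n with ⟨m, hm⟩ | ⟨m, hm⟩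
  · subst hm
    have h2 : (m + m) / 2 = m := by omega
    rw [h2]
    have : (m + m).choose m = Nat.centralBinom m := by
      rw [Nat.centralBinom, two_mul]
    rw [this]
    calc (m + m) * Nat.centralBinom m ^ 2 ≤ (3 * m + 1) * Nat.centralBinom m ^ 2 := by
          apply Nat.mul_le_mul_right; omega
      _ ≤ 16 ^ m := cb_upper m
      _ ≤ 4 ^ (m + m) := by rw [← two_mul, pow_mul]; norm_num
  · subst hm
    have h2 : (2 * m + 1) / 2 = m := by omega
    rw [h2]
    have hle : (2 * m + 1).choose m ≤ 2 * Nat.centralBinom m := by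
      have hsym : (2 * m + 1).choose m = (2 * m + 1).choose (m + 1) := by
        have := Nat.choose_symm (show m + 1 ≤ 2 * m + 1 by omega)
        have h3 : 2 * m + 1 - (m + 1) = m := by omega
        rw [h3] at this
        exact this
      rw [hsym, Nat.choose_succ_succ]
      simp only [Nat.succ_eq_add_one]
      have h1 : (2 * m).choose m = Nat.centralBinom m := rfl
      have h2 : (2 * m).choose (m + 1) ≤ Nat.centralBinom m := by
        rw [← h1]
        have := Nat.choose_le_middle (m + 1) (2 * m)
        simpa [Nat.mul_div_cancel_left] using this
      omega
    calc (2 * m + 1) * ((2 * m + 1).choose m) ^ 2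
        ≤ (2 * m + 1) * (2 * Nat.centralBinom m) ^ 2 := by
          apply Nat.mul_le_mul_left; exact Nat.pow_le_pow_left hle 2
      _ = 4 * ((2 * m + 1) * Nat.centralBinom m ^ 2) := by ring
      _ ≤ 4 * ((3 * m + 1) * Nat.centralBinom m ^ 2) := by
          apply Nat.mul_le_mul_left; apply Nat.mul_le_mul_right; omega
      _ ≤ 4 * 16 ^ m := Nat.mul_le_mul_left _ (cb_upper m)
      _ = 4 ^ (2 * m + 1) := by rw [pow_succ, pow_mul]; ring_nf

lemma key_choose (n j : ℕ) :
    ((j : ℝ) + 1) * ((n+1).choose (j+1) : ℝ) = ((n : ℝ) + 1) * (n.choose j : ℝ) := by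
  have h := Nat.add_one_mul_choose_eq n j
  have h2 : ((n + 1) * n.choose j : ℕ) = ((n+1).choose (j+1) * (j+1) : ℕ) := by
    simpa [Nat.succ_eq_add_one] using h
  have h3 : (((n + 1) * n.choose j : ℕ) : ℝ) = (((n+1).choose (j+1) * (j+1) : ℕ) : ℝ) :=
    congrArg Nat.cast h2
  push_cast at h3
  linarith

lemma sum_choose_real (n : ℕ) :
    ∑ k ∈ range (n + 1), (n.choose k : ℝ) = 2 ^ n := by
  have := Nat.sum_range_choose n
  have h : ((∑ m ∈ range (n+1), n.choose m : ℕ) : ℝ) = ((2 ^ n : ℕ) : ℝ) :=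
    congrArg Nat.cast this
  push_cast at h
  exact h

lemma sum_k_choose (n : ℕ) :
    ∑ k ∈ range (n + 1), (k : ℝ) * (n.choose k : ℝ) = n * 2 ^ n / 2 := by
  induction n with
  | zero => simp
  | succ n _ =>
    rw [Finset.sum_range_succ']
    calc (∑ j ∈ range (n + 1), ((j + 1 : ℕ) : ℝ) * ((n+1).choose (j+1) : ℝ))
          + ((0:ℕ):ℝ) * ((n+1).choose 0 : ℝ)
        = ∑ j ∈ range (n + 1), ((n : ℝ) + 1) * (n.choose j : ℝ) := by
          simp only [Nat.cast_zero, zero_mul, add_zero]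
          refine Finset.sum_congr rfl fun j _ => ?_
          push_cast
          exact key_choose n j
      _ = ((n : ℝ) + 1) * ∑ j ∈ range (n + 1), (n.choose j : ℝ) := by rw [Finset.mul_sum]
      _ = ((n : ℝ) + 1) * 2 ^ n := by rw [sum_choose_real]
      _ = (↑(n+1) : ℝ) * 2 ^ (n+1) / 2 := by push_cast; ring

lemma sum_kk_choose (n : ℕ) :
    ∑ k ∈ range (n + 1), (k : ℝ) * ((k : ℝ) - 1) * (n.choose k : ℝ)
      = n * (n - 1) * 2 ^ n / 4 := by
  induction n with
  | zero => simp
  | succ n _ =>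
    rw [Finset.sum_range_succ']
    calc (∑ j ∈ range (n + 1), ((j + 1 : ℕ) : ℝ) * (((j + 1 : ℕ) : ℝ) - 1) * ((n+1).choose (j+1) : ℝ))
          + ((0:ℕ):ℝ) * (((0:ℕ):ℝ) - 1) * ((n+1).choose 0 : ℝ)
        = ∑ j ∈ range (n + 1), ((n : ℝ) + 1) * ((j : ℝ) * (n.choose j : ℝ)) := by
          simp only [Nat.cast_zero, zero_mul, add_zero]
          refine Finset.sum_congr rfl fun j _ => ?_
          have := key_choose n j
          push_cast
          nlinarith [this]
      _ = ((n : ℝ) + 1) * ∑ j ∈ range (n + 1), (j : ℝ) * (n.choose j : ℝ) := by rw [Finset.mul_sum]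
      _ = ((n : ℝ) + 1) * (n * 2 ^ n / 2) := by rw [sum_k_choose]
      _ = (↑(n+1) : ℝ) * ((↑(n+1) : ℝ) - 1) * 2 ^ (n+1) / 4 := by push_cast; ring

-- variance identity
lemma sum_var_choose (n : ℕ) :
    ∑ k ∈ range (n + 1), ((k : ℝ) - n / 2) ^ 2 * (n.choose k : ℝ) = (n : ℝ) * 2 ^ n / 4 := by
  have h1 := sum_k_choose n
  have h2 := sum_kk_choose n
  have h3 := sum_choose_real n
  have expand : ∀ k ∈ range (n + 1),
      ((k : ℝ) - n / 2) ^ 2 * (n.choose k : ℝ)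
        = (k : ℝ) * ((k : ℝ) - 1) * (n.choose k : ℝ)
          + (1 - (n : ℝ)) * ((k : ℝ) * (n.choose k : ℝ))
          + ((n : ℝ) ^ 2 / 4) * (n.choose k : ℝ) := by
    intro k _; ring
  rw [Finset.sum_congr rfl expand, Finset.sum_add_distrib, Finset.sum_add_distrib,
    ← Finset.mul_sum, ← Finset.mul_sum, h1, h2, h3]
  ring

-- reflection: first moment of cubes
lemma sum_k_choose_cube (n : ℕ) :
    ∑ k ∈ range (n + 1), (k : ℝ) * (n.choose k : ℝ) ^ 3
      = (n : ℝ) / 2 * ∑ k ∈ range (n + 1), (n.choose k : ℝ) ^ 3 := by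
  have hrefl := Finset.sum_range_reflect (fun k => (k : ℝ) * (n.choose k : ℝ) ^ 3) (n + 1)
  have hstep : ∀ j ∈ range (n + 1),
      ((n + 1 - 1 - j : ℕ) : ℝ) * ((n.choose (n + 1 - 1 - j) : ℕ) : ℝ) ^ 3
        = (n : ℝ) * (n.choose j : ℝ) ^ 3 - (j : ℝ) * (n.choose j : ℝ) ^ 3 := by
    intro j hj
    have hj' : j ≤ n := by simpa [Nat.lt_succ_iff] using hj
    have h1 : n + 1 - 1 - j = n - j := by omega
    rw [h1, Nat.choose_symm hj', Nat.cast_sub hj']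
    ring
  rw [Finset.sum_congr rfl hstep, Finset.sum_sub_distrib, ← Finset.mul_sum] at hrefl
  linarith

-- Cauchy-Schwarz: cb^2 ≤ S * 2^n
lemma cs_bound (n : ℕ) :
    ((Nat.centralBinom n : ℕ) : ℝ) ^ 2
      ≤ (∑ k ∈ range (n + 1), (n.choose k : ℝ) ^ 3) * 2 ^ n := by
  have h := Finset.sum_sq_le_sum_mul_sum_of_sq_eq_mul (range (n + 1))
    (r := fun k => (n.choose k : ℝ) ^ 2) (f := fun k => (n.choose k : ℝ) ^ 3)
    (g := fun k => (n.choose k : ℝ))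
    (fun i _ => by positivity) (fun i _ => by positivity) (fun i _ => by ring)
  rw [sum_choose_real] at h
  have hc : ∑ k ∈ range (n + 1), (n.choose k : ℝ) ^ 2
      = ((Nat.centralBinom n : ℕ) : ℝ) := by
    rw [← sum_choose_sq]
    push_cast
    rfl
  rw [hc] at h
  exact h

lemma main_bounds (n : ℕ) (hn : 1 ≤ n) :
    1 / 4 - 1 / (2 * (n : ℝ)) ≤
      (∑ k ∈ range (n + 1), (k : ℝ) * ((k : ℝ) - 1) * (n.choose k : ℝ) ^ 3) /
        ((n : ℝ) ^ 2 * ∑ k ∈ range (n + 1), (n.choose k : ℝ) ^ 3) ∧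
    (∑ k ∈ range (n + 1), (k : ℝ) * ((k : ℝ) - 1) * (n.choose k : ℝ) ^ 3) /
        ((n : ℝ) ^ 2 * ∑ k ∈ range (n + 1), (n.choose k : ℝ) ^ 3) ≤
      1 / 4 + 1 / (2 * (n : ℝ)) := by
  set S := ∑ k ∈ range (n + 1), (n.choose k : ℝ) ^ 3 with hS
  set N := ∑ k ∈ range (n + 1), (k : ℝ) * ((k : ℝ) - 1) * (n.choose k : ℝ) ^ 3 with hN
  set E := ∑ k ∈ range (n + 1), ((k : ℝ) - n / 2) ^ 2 * (n.choose k : ℝ) ^ 3 with hE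
  have hnR : (1 : ℝ) ≤ (n : ℝ) := by exact_mod_cast hn
  have hnpos : (0 : ℝ) < n := by linarith
  -- S lower bound
  have hcb : (16 : ℝ) ^ n ≤ 4 * n * ((Nat.centralBinom n : ℕ) : ℝ) ^ 2 := by
    have := cb_lower n hn
    exact_mod_cast this
  have hSlow : (16 : ℝ) ^ n ≤ 4 * n * (S * 2 ^ n) := by
    calc (16 : ℝ) ^ n ≤ 4 * n * ((Nat.centralBinom n : ℕ) : ℝ) ^ 2 := hcb
      _ ≤ 4 * n * (S * 2 ^ n) := by
          have := cs_bound n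
          nlinarith
  have hSpos : 0 < S := by
    by_contra h
    push_neg at h
    have h16 : (0:ℝ) < 16 ^ n := by positivity
    have h2 : (0:ℝ) < 2 ^ n := by positivity
    have hS2 : S * 2 ^ n ≤ 0 := mul_nonpos_of_nonpos_of_nonneg h h2.le
    have h3 : 4 * (n:ℝ) * (S * 2 ^ n) ≤ 0 :=
      mul_nonpos_of_nonneg_of_nonpos (by positivity) hS2
    linarith
  have hDen : (0 : ℝ) < (n : ℝ) ^ 2 * S := by positivity
  -- E bounds
  have hE0 : 0 ≤ E := Finset.sum_nonneg fun k _ => by positivity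
  have hM : ∀ k ∈ range (n + 1), (n.choose k : ℝ) ≤ (n.choose (n / 2) : ℝ) := by
    intro k _
    exact_mod_cast Nat.choose_le_middle k n
  have hEub : E ≤ ((n.choose (n / 2) : ℝ)) ^ 2 * ((n : ℝ) * 2 ^ n / 4) := by
    rw [← sum_var_choose n, Finset.mul_sum]
    refine Finset.sum_le_sum fun k hk => ?_
    have h1 := hM k hk
    have h2 : (0:ℝ) ≤ (n.choose k : ℝ) := by positivity
    have h3 : (0:ℝ) ≤ ((k : ℝ) - n / 2) ^ 2 := sq_nonneg _
    have h4 : (n.choose k : ℝ) ^ 3 ≤ (n.choose (n / 2) : ℝ) ^ 2 * (n.choose k : ℝ) := by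
      have h5 : (n.choose k : ℝ) ^ 2 ≤ (n.choose (n / 2) : ℝ) ^ 2 := by
        apply pow_le_pow_left₀ h2 h1
      calc (n.choose k : ℝ) ^ 3 = (n.choose k : ℝ) ^ 2 * (n.choose k : ℝ) := by ring
        _ ≤ (n.choose (n / 2) : ℝ) ^ 2 * (n.choose k : ℝ) :=
            mul_le_mul_of_nonneg_right h5 h2
    calc ((k : ℝ) - n / 2) ^ 2 * (n.choose k : ℝ) ^ 3
        ≤ ((k : ℝ) - n / 2) ^ 2 * ((n.choose (n / 2) : ℝ) ^ 2 * (n.choose k : ℝ)) :=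
          mul_le_mul_of_nonneg_left h4 h3
      _ = (n.choose (n / 2) : ℝ) ^ 2 * (((k : ℝ) - n / 2) ^ 2 * (n.choose k : ℝ)) := by ring
  have hmid : ((n : ℝ)) * ((n.choose (n / 2) : ℝ)) ^ 2 ≤ 4 ^ n := by
    exact_mod_cast middle_sq_le n
  have hE8 : E ≤ 8 ^ n / 4 := by
    have h2 : (0:ℝ) < 2 ^ n := by positivity
    have h48 : (4:ℝ) ^ n * 2 ^ n = 8 ^ n := by
      rw [← mul_pow]; norm_num
    nlinarith
  -- denominator lower bound: n^2 * S ≥ n * 8^n / 4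
  have hden8 : (n : ℝ) * 8 ^ n / 4 ≤ (n : ℝ) ^ 2 * S := by
    have h2 : (0:ℝ) < 2 ^ n := by positivity
    have h16 : (16:ℝ) ^ n = 8 ^ n * 2 ^ n := by rw [← mul_pow]; norm_num
    nlinarith
  -- decomposition
  have hdecomp : N = E + ((n : ℝ) ^ 2 / 4 - (n : ℝ) / 2) * S := by
    have expand : ∀ k ∈ range (n + 1),
        (k : ℝ) * ((k : ℝ) - 1) * (n.choose k : ℝ) ^ 3
          = ((k : ℝ) - n / 2) ^ 2 * (n.choose k : ℝ) ^ 3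
            + ((n : ℝ) - 1) * ((k : ℝ) * (n.choose k : ℝ) ^ 3)
            - ((n : ℝ) ^ 2 / 4) * (n.choose k : ℝ) ^ 3 := by
      intro k _; ring
    rw [hN, Finset.sum_congr rfl expand]
    rw [Finset.sum_sub_distrib, Finset.sum_add_distrib, ← Finset.mul_sum, ← Finset.mul_sum,
      sum_k_choose_cube n, ← hS, ← hE]
    ring
  -- ratio identity
  have hratio : N / ((n : ℝ) ^ 2 * S) = E / ((n : ℝ) ^ 2 * S) + (1 / 4 - 1 / (2 * n)) := by
    rw [hdecomp]
    field_simp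
  have hEdiv0 : 0 ≤ E / ((n : ℝ) ^ 2 * S) := div_nonneg hE0 hDen.le
  have hEdiv : E / ((n : ℝ) ^ 2 * S) ≤ 1 / n := by
    have h8 : (0:ℝ) < 8 ^ n := by positivity
    calc E / ((n : ℝ) ^ 2 * S) ≤ (8 ^ n / 4) / ((n : ℝ) * 8 ^ n / 4) := by
          apply div_le_div₀ (by positivity) hE8 (by positivity) hden8
      _ = 1 / n := by field_simp
  constructor
  · rw [hratio]; linarith
  · rw [hratio]
    have : 1 / (n:ℝ) = 1 / (2*n) + 1/(2*n) := by field_simp; ring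
    linarith

theorem franel_second_moment_limit :
    Filter.Tendsto
      (fun n : ℕ =>
        (∑ k ∈ Finset.range (n + 1), (k : ℝ) * (k - 1) * ((n.choose k : ℕ) : ℝ) ^ 3) /
          ((n : ℝ) ^ 2 * ∑ k ∈ Finset.range (n + 1), ((n.choose k : ℕ) : ℝ) ^ 3))
      Filter.atTop (nhds (1 / 4)) := by
  have hhalf : Filter.Tendsto (fun n : ℕ => 1 / (2 * (n : ℝ))) Filter.atTop (nhds 0) := by
    have h := Filter.Tendsto.const_mul (1/2 : ℝ) tendsto_one_div_atTop_nhds_zero_nat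
    rw [mul_zero] at h
    convert h using 2 with n
    rw [mul_one_div]
    rw [div_div]
  have hlow : Filter.Tendsto (fun n : ℕ => 1 / 4 - 1 / (2 * (n : ℝ))) Filter.atTop
      (nhds (1 / 4)) := by
    have := (tendsto_const_nhds (x := (1/4 : ℝ)) (f := Filter.atTop (α := ℕ))).sub hhalf
    simpa using this
  have hup : Filter.Tendsto (fun n : ℕ => 1 / 4 + 1 / (2 * (n : ℝ))) Filter.atTop
      (nhds (1 / 4)) := by
    have := (tendsto_const_nhds (x := (1/4 : ℝ)) (f := Filter.atTop (α := ℕ))).add hhalf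
    simpa using this
  refine tendsto_of_tendsto_of_tendsto_of_le_of_le' hlow hup ?_ ?_
  · filter_upwards [Filter.eventually_ge_atTop 1] with n hn
    exact (main_bounds n hn).1
  · filter_upwards [Filter.eventually_ge_atTop 1] with n hn
    exact (main_bounds n hn).2
end
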